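/- arXiv:2206.03076 — 3 statements merged into one kernel-verified Lean document; each statement's English description precedes it below -/
import Mathlib

section
/- Let Ω ⊂ ℝⁿ (n ≥ 2) be open and u : Ω → ℝⁿ twice differentiable and nowhere vanishing, with radial part 𝓡_u and spherical part 𝓢_u. Then: (i) Δu = 𝓡_u Δ𝓢_u + 2 ∇𝓢_u ∇𝓡_u + Δ𝓡_u 𝓢_u; (ii) [∇u]ᵗΔu = 𝓡_u² [∇𝓢_u]ᵗ Δ𝓢_u + 𝓡_u [2[∇𝓢_u]ᵗ[∇𝓢_u] + ⟨𝓢_u, Δ𝓢_u⟩ I_n] ∇𝓡_u + Δ𝓡_u ∇𝓡_u; (iii) ∇(|∇u|²) = 2 𝓡_u |∇𝓢_u|² ∇𝓡_u + 2 𝓡_u² ∇²𝓢_u ∇𝓢_u + 2 ∇²𝓡_u ∇𝓡_u. -/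
open scoped BigOperators
open Matrix

noncomputable section

/-- Partial derivative `∂g/∂x_j` of a scalar field on `ℝᵐ`. -/
def pdx {m : ℕ} (g : (Fin m → ℝ) → ℝ) (x : Fin m → ℝ) (j : Fin m) : ℝ :=
  fderiv ℝ g x (Pi.single j 1)

/-- Gradient of a scalar field on `ℝᵐ`. -/
def gradx {m : ℕ} (g : (Fin m → ℝ) → ℝ) (x : Fin m → ℝ) : Fin m → ℝ :=
  fun j => pdx g x j

/-- Gradient matrix `∇u`, with entries `(∇u)_{ij} = ∂u_i/∂x_j`. -/
def gradm {n : ℕ} (u : (Fin n → ℝ) → Fin n → ℝ) (x : Fin n → ℝ) :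
    Matrix (Fin n) (Fin n) ℝ :=
  Matrix.of fun i j => pdx (fun z => u z i) x j

/-- Laplacian of a scalar field. -/
def lapx {m : ℕ} (g : (Fin m → ℝ) → ℝ) (x : Fin m → ℝ) : ℝ :=
  ∑ j, pdx (fun z => pdx g z j) x j

/-- Hessian matrix of a scalar field. -/
def hessx {m : ℕ} (g : (Fin m → ℝ) → ℝ) (x : Fin m → ℝ) : Matrix (Fin m) (Fin m) ℝ :=
  Matrix.of fun i j => pdx (fun z => pdx g z j) x i

/-- Componentwise Laplacian of a vector field. -/
def lapv {n : ℕ} (u : (Fin n → ℝ) → Fin n → ℝ) (x : Fin n → ℝ) : Fin n → ℝ :=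
  fun i => lapx (fun z => u z i) x

/-- Squared Euclidean norm of a vector. -/
def norm2 {m : ℕ} (v : Fin m → ℝ) : ℝ := ∑ i, v i ^ 2

/-- Euclidean norm of a vector. -/
def enr {m : ℕ} (v : Fin m → ℝ) : ℝ := Real.sqrt (norm2 v)

/-- Squared Frobenius norm of a matrix, `|E|² = tr (EᵗE)`. -/
def frob2 {n : ℕ} (M : Matrix (Fin n) (Fin n) ℝ) : ℝ := ∑ i, ∑ j, M i j ^ 2

/-- The 2-plane radial variables `y = (y_1, …, y_N)`, `N = ⌈n/2⌉` (0-indexed):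
`y_ℓ = √(x_{2ℓ}² + x_{2ℓ+1}²)` and, when `n` is odd, `y_{N-1} = x_{n-1}`. -/
def yvar {n : ℕ} (x : Fin n → ℝ) (ℓ : Fin ((n+1)/2)) : ℝ :=
  if h : 2 * (ℓ : ℕ) + 1 < n then
    Real.sqrt (x ⟨2*(ℓ:ℕ), by omega⟩ ^ 2 + x ⟨2*(ℓ:ℕ)+1, h⟩ ^ 2)
  else x ⟨n - 1, by have := ℓ.isLt; omega⟩

/-- The vector of 2-plane radial variables of `x`. -/
def yv {n : ℕ} (x : Fin n → ℝ) : Fin ((n+1)/2) → ℝ := fun ℓ => yvar x ℓ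

/-- Inclusion `Fin (n/2) → Fin ((n+1)/2)`, i.e. `d = ⌊n/2⌋` into `N = ⌈n/2⌉`. -/
def dIdx {n : ℕ} (i : Fin (n/2)) : Fin ((n+1)/2) := ⟨(i:ℕ), by have := i.isLt; omega⟩

/-- Partial derivative `∂_ℓ M` of a matrix field on `ℝᴺ`. -/
def pdM {n N : ℕ} (M : (Fin N → ℝ) → Matrix (Fin n) (Fin n) ℝ)
    (y : Fin N → ℝ) (ℓ : Fin N) : Matrix (Fin n) (Fin n) ℝ :=
  Matrix.of fun i j => pdx (fun z => M z i j) y ℓ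

/-- Second partial derivative `∂²_{ℓk} M` of a matrix field on `ℝᴺ`. -/
def pdM2 {n N : ℕ} (M : (Fin N → ℝ) → Matrix (Fin n) (Fin n) ℝ)
    (y : Fin N → ℝ) (ℓ k : Fin N) : Matrix (Fin n) (Fin n) ℝ :=
  Matrix.of fun i j => pdx (fun z => pdM M z ℓ i j) y k

/-- The block diagonal `SO(n)`-valued matrix field `Q[f]`, with `2×2` rotation blocks
`R[f_ℓ(y)]` (and an extra diagonal `1` when `n` is odd). -/
def Qf {n : ℕ} (f : (Fin ((n+1)/2) → ℝ) → Fin (n/2) → ℝ)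
    (y : Fin ((n+1)/2) → ℝ) : Matrix (Fin n) (Fin n) ℝ :=
  Matrix.of fun i j =>
    if h : (i:ℕ)/2 = (j:ℕ)/2 ∧ (i:ℕ)/2 < n/2 then
      (if (i:ℕ) % 2 = 0 then
        (if (j:ℕ) % 2 = 0 then Real.cos (f y ⟨(i:ℕ)/2, h.2⟩)
         else -Real.sin (f y ⟨(i:ℕ)/2, h.2⟩))
       else
        (if (j:ℕ) % 2 = 0 then Real.sin (f y ⟨(i:ℕ)/2, h.2⟩)
         else Real.cos (f y ⟨(i:ℕ)/2, h.2⟩)))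
    else (if i = j then 1 else 0)

/-- The block diagonal rotation matrix `exp(α𝐇) = diag(R[α], …, R[α])`
(an extra diagonal `1` when `n` is odd). -/
def rotM (n : ℕ) (α : ℝ) : Matrix (Fin n) (Fin n) ℝ :=
  Matrix.of fun i j =>
    if (i:ℕ)/2 = (j:ℕ)/2 ∧ (i:ℕ)/2 < n/2 then
      (if (i:ℕ) % 2 = 0 then
        (if (j:ℕ) % 2 = 0 then Real.cos α else -Real.sin α)
       else
        (if (j:ℕ) % 2 = 0 then Real.sin α else Real.cos α))
    else (if i = j then 1 else 0)

/-- The vector `w^k = (0, …, 0, x_{2k}, x_{2k+1}, 0, …, 0)`. -/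
def wv {n : ℕ} (x : Fin n → ℝ) (k : Fin ((n+1)/2)) : Fin n → ℝ :=
  fun j => if (j:ℕ)/2 = (k:ℕ) then x j else 0

/-- The vector `[w^k]^⊥ = (0, …, 0, -x_{2k+1}, x_{2k}, 0, …, 0)` (zero in the odd last slot). -/
def wperp {n : ℕ} (x : Fin n → ℝ) (k : Fin ((n+1)/2)) : Fin n → ℝ :=
  fun j =>
    if h : (j:ℕ)/2 = (k:ℕ) ∧ 2*(k:ℕ)+1 < n then
      (if (j:ℕ) % 2 = 0 then -x ⟨2*(k:ℕ)+1, h.2⟩ else x ⟨2*(k:ℕ), by omega⟩)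
    else 0

/-- The differential operator
`𝓛[u;A,B] = [∇u]ᵗ[∇u]∇A + A [∇u]ᵗΔu + B [∇u]ᵗu`, where `A, B` are evaluated at
`(|x|, |u|², |∇u|²)` and `∇A` is the spatial gradient of `x ↦ A(|x|,|u(x)|²,|∇u(x)|²)`. -/
def LAB {n : ℕ} (A B : ℝ → ℝ → ℝ → ℝ) (u : (Fin n → ℝ) → Fin n → ℝ)
    (x : Fin n → ℝ) : Fin n → ℝ :=
  ((gradm u x)ᵀ * gradm u x) *ᵥ
      gradx (fun z => A (enr z) (norm2 (u z)) (frob2 (gradm u z))) x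
    + A (enr x) (norm2 (u x)) (frob2 (gradm u x)) • ((gradm u x)ᵀ *ᵥ lapv u x)
    + B (enr x) (norm2 (u x)) (frob2 (gradm u x)) • ((gradm u x)ᵀ *ᵥ u x)

/-- The annulus `𝕏ₙ = {x : a < |x| < b}` in `ℝⁿ`. -/
def Xann (n : ℕ) (a b : ℝ) : Set (Fin n → ℝ) := {x | a < enr x ∧ enr x < b}

/-- The region `𝔸ₙ = {y : a < ‖y‖ < b}` (with the 2-plane radial coordinates positive). -/
def Ann (n : ℕ) (a b : ℝ) : Set (Fin ((n+1)/2) → ℝ) :=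
  {y | a < enr y ∧ enr y < b ∧ ∀ ℓ : Fin ((n+1)/2), 2*(ℓ:ℕ)+1 < n → 0 < y ℓ}

/-- `𝒥(y) = y_1 ⋯ y_d`. -/
def Jac (n : ℕ) (y : Fin ((n+1)/2) → ℝ) : ℝ :=
  ∏ ℓ : Fin ((n+1)/2), if 2*(ℓ:ℕ)+1 < n then y ℓ else 1

/-- The argument `ξ = n + Σ_j y_j² |∇f_j|²`. -/
def xiArg (n : ℕ) (f : (Fin ((n+1)/2) → ℝ) → Fin (n/2) → ℝ)
    (y : Fin ((n+1)/2) → ℝ) : ℝ :=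
  (n : ℝ) + ∑ j : Fin (n/2), (y (dIdx j))^2 * norm2 (gradx (fun z => f z j) y)

/-- The coefficients `𝒜_i(y,∇f) = y_i² A(z, z², n + Σ_j y_j²|∇f_j|²) 𝒥(y)`, `z = ‖y‖`. -/
def coefA (n : ℕ) (A : ℝ → ℝ → ℝ → ℝ) (f : (Fin ((n+1)/2) → ℝ) → Fin (n/2) → ℝ)
    (i : Fin (n/2)) (y : Fin ((n+1)/2) → ℝ) : ℝ :=
  (y (dIdx i))^2 * A (enr y) ((enr y)^2) (xiArg n f y) * Jac n y

/-- `div [𝒜_i(y,∇f) ∇f_i]`, divergence taken in the `y` variables. -/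
def divA (n : ℕ) (A : ℝ → ℝ → ℝ → ℝ) (f : (Fin ((n+1)/2) → ℝ) → Fin (n/2) → ℝ)
    (i : Fin (n/2)) (y : Fin ((n+1)/2) → ℝ) : ℝ :=
  ∑ k, pdx (fun z => coefA n A f i z * pdx (fun w => f w i) z k) y k

/-- The curl of a vector field, `[curl U]_{ij} = ∂_j U_i − ∂_i U_j`. -/
def curlm {n : ℕ} (U : (Fin n → ℝ) → Fin n → ℝ) (x : Fin n → ℝ) :
    Matrix (Fin n) (Fin n) ℝ :=
  Matrix.of fun i j => pdx (fun z => U z i) x j - pdx (fun z => U z j) x i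

end


section Helpers
variable {m : ℕ} {x : Fin m → ℝ}

theorem pdx_congr {f g : (Fin m → ℝ) → ℝ} (h : f =ᶠ[nhds x] g) (j : Fin m) :
    pdx f x j = pdx g x j := by unfold pdx; rw [h.fderiv_eq]

theorem pdx_add {f g : (Fin m → ℝ) → ℝ} (hf : DifferentiableAt ℝ f x)
    (hg : DifferentiableAt ℝ g x) (j : Fin m) :
    pdx (fun z => f z + g z) x j = pdx f x j + pdx g x j := by
  unfold pdx; rw [fderiv_fun_add hf hg]; rfl

theorem pdx_mul {f g : (Fin m → ℝ) → ℝ} (hf : DifferentiableAt ℝ f x)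
    (hg : DifferentiableAt ℝ g x) (j : Fin m) :
    pdx (fun z => f z * g z) x j = pdx f x j * g x + f x * pdx g x j := by
  unfold pdx; rw [fderiv_fun_mul hf hg]; simp; ring

theorem pdx_sum {ι : Type*} (s : Finset ι) (f : ι → (Fin m → ℝ) → ℝ)
    (hf : ∀ i ∈ s, DifferentiableAt ℝ (f i) x) (j : Fin m) :
    pdx (fun z => ∑ i ∈ s, f i z) x j = ∑ i ∈ s, pdx (f i) x j := by
  unfold pdx; rw [fderiv_fun_sum hf]; simp

theorem pdx_const (c : ℝ) (j : Fin m) : pdx (fun _ => c) x j = 0 := by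
  unfold pdx; simp

theorem pdx_sq {f : (Fin m → ℝ) → ℝ} (hf : DifferentiableAt ℝ f x) (j : Fin m) :
    pdx (fun z => f z ^ 2) x j = 2 * (f x * pdx f x j) := by
  have h : (fun z => f z ^ 2) = fun z => f z * f z := by funext z; ring
  rw [h, pdx_mul hf hf]; ring

theorem contDiffAt_pdx {g : (Fin m → ℝ) → ℝ} (hg : ContDiffAt ℝ 2 g x) (j : Fin m) :
    ContDiffAt ℝ 1 (fun z => pdx g z j) x := by
  have h1 := hg.fderiv_right (m := 1) (by norm_num)
  exact (ContinuousLinearMap.apply ℝ ℝ (Pi.single j 1 : Fin m → ℝ)).contDiff.contDiffAt.comp x h1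

end Helpers

/-- Lemma 2.2: second-order identities for the radial and spherical
parts of a nowhere vanishing twice differentiable map `u`. -/
theorem stmt1 (n : ℕ) (hn : 2 ≤ n) (Ω : Set (Fin n → ℝ)) (hΩ : IsOpen Ω)
    (u : (Fin n → ℝ) → Fin n → ℝ)
    (hud : ∀ x ∈ Ω, ContDiffAt ℝ 2 u x)
    (hu0 : ∀ x ∈ Ω, u x ≠ 0)
    (x : Fin n → ℝ) (hx : x ∈ Ω) :
    let R : (Fin n → ℝ) → ℝ := fun z => enr (u z)
    let S : (Fin n → ℝ) → Fin n → ℝ := fun z i => u z i / enr (u z)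
    let Du := gradm u x
    let DS := gradm S x
    let gR := gradx R x
    -- (i)
    (lapv u x = R x • lapv S x + (2:ℝ) • (DS *ᵥ gR) + lapx R x • S x) ∧
    -- (ii)
    (Duᵀ *ᵥ lapv u x
      = (R x)^2 • (DSᵀ *ᵥ lapv S x)
        + R x • ((((2:ℝ) • (DSᵀ * DS)
            + (S x ⬝ᵥ lapv S x) • (1 : Matrix (Fin n) (Fin n) ℝ)) *ᵥ gR))
        + lapx R x • gR) ∧
    -- (iii)
    (gradx (fun z => frob2 (gradm u z)) x
      = (2 * R x * frob2 DS) • gR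
        + (2 * (R x)^2) • (fun k => ∑ i, ∑ j, hessx (fun z => S z i) x k j * DS i j)
        + (2:ℝ) • (hessx R x *ᵥ gR)) := by
  intro R S Du DS gR
  classical
  have hΩn : Ω ∈ nhds x := hΩ.mem_nhds hx
  have hui : ∀ y ∈ Ω, ∀ i, ContDiffAt ℝ 2 (fun z => u z i) y :=
    fun y hy i => (contDiffAt_pi.mp (hud y hy)) i
  have hNpos : ∀ y ∈ Ω, 0 < norm2 (u y) := by
    intro y hy
    obtain ⟨i, hi⟩ := Function.ne_iff.mp (hu0 y hy)
    have h1 : 0 < u y i ^ 2 := lt_of_le_of_ne (sq_nonneg _) (Ne.symm (pow_ne_zero 2 hi))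
    have h2 : u y i ^ 2 ≤ ∑ i, u y i ^ 2 :=
      Finset.single_le_sum (f := fun i => u y i ^ 2) (fun _ _ => sq_nonneg _) (Finset.mem_univ i)
    unfold norm2; linarith
  have hN2 : ∀ y ∈ Ω, ContDiffAt ℝ 2 (fun z => norm2 (u z)) y := by
    intro y hy
    have : (fun z => norm2 (u z)) = fun z => ∑ i, (u z i) ^ 2 := rfl
    rw [this]
    exact ContDiffAt.sum fun i _ => (hui y hy i).pow 2
  have hR2 : ∀ y ∈ Ω, ContDiffAt ℝ 2 R y := by
    intro y hy
    exact (Real.contDiffAt_sqrt (hNpos y hy).ne').comp y (hN2 y hy)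
  have hRpos : ∀ y ∈ Ω, 0 < R y := fun y hy => Real.sqrt_pos.mpr (hNpos y hy)
  have hS2 : ∀ y ∈ Ω, ∀ i, ContDiffAt ℝ 2 (fun z => S z i) y :=
    fun y hy i => (hui y hy i).div (hR2 y hy) (hRpos y hy).ne'
  have hRd : ∀ y ∈ Ω, DifferentiableAt ℝ R y :=
    fun y hy => (hR2 y hy).differentiableAt two_ne_zero
  have hSd : ∀ y ∈ Ω, ∀ i, DifferentiableAt ℝ (fun z => S z i) y :=
    fun y hy i => (hS2 y hy i).differentiableAt two_ne_zero
  have hRd1 : ∀ j, DifferentiableAt ℝ (fun z => pdx R z j) x :=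
    fun j => (contDiffAt_pdx (hR2 x hx) j).differentiableAt one_ne_zero
  have hSd1 : ∀ i j, DifferentiableAt ℝ (fun z => pdx (fun w => S w i) z j) x :=
    fun i j => (contDiffAt_pdx (hS2 x hx i) j).differentiableAt one_ne_zero
  have huRS : ∀ z i, u z i = R z * S z i := by
    intro z i
    rcases eq_or_ne (enr (u z)) 0 with h | h
    · have h0 : 0 ≤ norm2 (u z) := Finset.sum_nonneg fun _ _ => sq_nonneg _
      have hn0 : norm2 (u z) = 0 := by
        have := Real.sq_sqrt h0
        unfold enr at h; rw [h] at this; simpa using this.symm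
      have h2 : u z i ^ 2 ≤ 0 := by
        have h3 : u z i ^ 2 ≤ ∑ i, u z i ^ 2 := Finset.single_le_sum
          (f := fun i => u z i ^ 2) (fun _ _ => sq_nonneg _) (Finset.mem_univ i)
        unfold norm2 at hn0; linarith
      have hz : u z i = 0 := by nlinarith [sq_nonneg (u z i)]
      show u z i = enr (u z) * (u z i / enr (u z))
      rw [hz]; simp
    · show u z i = enr (u z) * (u z i / enr (u z))
      field_simp
  have hRsq : ∀ y ∈ Ω, R y ^ 2 = ∑ i, u y i ^ 2 := by
    intro y hy
    have h0 : 0 ≤ norm2 (u y) := le_of_lt (hNpos y hy)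
    show Real.sqrt (norm2 (u y)) ^ 2 = _
    rw [Real.sq_sqrt h0]; rfl
  have hSnorm : ∀ y ∈ Ω, ∑ i, S y i ^ 2 = 1 := by
    intro y hy
    have h1 : ∑ i, S y i ^ 2 = (∑ i, u y i ^ 2) / (R y) ^ 2 := by
      rw [Finset.sum_div]
      refine Finset.sum_congr rfl fun i _ => ?_
      show (u y i / R y) ^ 2 = u y i ^ 2 / R y ^ 2
      rw [div_pow]
    rw [h1, hRsq y hy]
    exact div_self (ne_of_gt (hNpos y hy))
  have hd1 : ∀ y ∈ Ω, ∀ i j, pdx (fun z => u z i) y j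
      = pdx R y j * S y i + R y * pdx (fun z => S z i) y j := by
    intro y hy i j
    have he : (fun z => u z i) = fun z => R z * S z i := funext fun z => huRS z i
    rw [he, pdx_mul (hRd y hy) (hSd y hy i)]
  have hd2 : ∀ i j k, pdx (fun z => pdx (fun w => u w i) z j) x k
      = pdx (fun z => pdx R z j) x k * S x i + pdx R x j * pdx (fun z => S z i) x k
        + (pdx R x k * pdx (fun z => S z i) x j
          + R x * pdx (fun z => pdx (fun w => S w i) z j) x k) := by
    intro i j k
    have he : (fun z => pdx (fun w => u w i) z j)
        =ᶠ[nhds x] fun z => pdx R z j * S z i + R z * pdx (fun w => S w i) z j :=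
      Filter.eventually_of_mem hΩn fun y hy => hd1 y hy i j
    rw [pdx_congr he k,
      pdx_add ((hRd1 j).fun_mul (hSd x hx i)) ((hRd x hx).fun_mul (hSd1 i j)),
      pdx_mul (hRd1 j) (hSd x hx i), pdx_mul (hRd x hx) (hSd1 i j)]
  have horth1 : ∀ y ∈ Ω, ∀ j, ∑ i, S y i * pdx (fun z => S z i) y j = 0 := by
    intro y hy j
    have h0 : pdx (fun z => ∑ i, S z i ^ 2) y j = 0 := by
      have he : (fun z => ∑ i, S z i ^ 2) =ᶠ[nhds y] fun _ => (1:ℝ) :=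
        Filter.eventually_of_mem (hΩ.mem_nhds hy) fun w hw => hSnorm w hw
      rw [pdx_congr he, pdx_const]
    rw [pdx_sum Finset.univ _ (fun i _ => ((hSd y hy i).fun_pow 2)) j] at h0
    have h1 : ∑ i, pdx (fun z => S z i ^ 2) y j
        = 2 * ∑ i, S y i * pdx (fun z => S z i) y j := by
      rw [Finset.mul_sum]
      exact Finset.sum_congr rfl fun i _ => pdx_sq (hSd y hy i) j
    rw [h1] at h0; linarith
  have horth2 : ∀ j k, ∑ i, (pdx (fun z => S z i) x k * pdx (fun z => S z i) x j
      + S x i * pdx (fun z => pdx (fun w => S w i) z j) x k) = 0 := by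
    intro j k
    have h0 : pdx (fun z => ∑ i, S z i * pdx (fun w => S w i) z j) x k = 0 := by
      have he : (fun z => ∑ i, S z i * pdx (fun w => S w i) z j) =ᶠ[nhds x]
          fun _ => (0:ℝ) := Filter.eventually_of_mem hΩn fun y hy => horth1 y hy j
      rw [pdx_congr he, pdx_const]
    rw [pdx_sum Finset.univ _ (fun i _ => (hSd x hx i).fun_mul (hSd1 i j)) k] at h0
    rw [← h0]
    exact Finset.sum_congr rfl fun i _ => (pdx_mul (hSd x hx i) (hSd1 i j) k).symm
  have hud1 : ∀ i j, DifferentiableAt ℝ (fun z => pdx (fun w => u w i) z j) x :=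
    fun i j => (contDiffAt_pdx (hui x hx i) j).differentiableAt one_ne_zero
  have hlapu : ∀ i, lapx (fun z => u z i) x
      = R x * lapx (fun z => S z i) x
        + 2 * (∑ j, pdx (fun z => S z i) x j * pdx R x j)
        + lapx R x * S x i := by
    intro i
    have h1 : lapx (fun z => S z i) x
        = ∑ j, pdx (fun z => pdx (fun w => S w i) z j) x j := rfl
    have h2 : lapx R x = ∑ j, pdx (fun z => pdx R z j) x j := rfl
    show (∑ j, pdx (fun z => pdx (fun w => u w i) z j) x j) = _
    rw [Finset.sum_congr rfl fun j _ => hd2 i j j, h1, h2, Finset.mul_sum,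
      Finset.mul_sum, Finset.sum_mul, ← Finset.sum_add_distrib, ← Finset.sum_add_distrib]
    exact Finset.sum_congr rfl fun j _ => by ring
  have hE1 : ∑ i, S x i ^ 2 = 1 := hSnorm x hx
  have hE2 : ∀ j, ∑ i, S x i * pdx (fun z => S z i) x j = 0 := horth1 x hx
  have hE3 : ∑ i, S x i * (∑ j, pdx (fun z => S z i) x j * pdx R x j) = 0 := by
    have h1 : ∀ i : Fin n, S x i * (∑ j, pdx (fun z => S z i) x j * pdx R x j)
        = ∑ j, (S x i * pdx (fun z => S z i) x j) * pdx R x j := by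
      intro i
      rw [Finset.mul_sum]
      exact Finset.sum_congr rfl fun j _ => by ring
    rw [Finset.sum_congr rfl fun i _ => h1 i, Finset.sum_comm]
    refine Finset.sum_eq_zero fun j _ => ?_
    rw [← Finset.sum_mul, hE2 j, zero_mul]
  have hE4 : ∀ j k, ∑ i, S x i * pdx (fun z => pdx (fun w => S w i) z j) x k
      = - ∑ i, pdx (fun z => S z i) x k * pdx (fun z => S z i) x j := by
    intro j k
    have h := horth2 j k
    rw [Finset.sum_add_distrib] at h
    linarith
  -- key scalar identity for part (ii)
  have hkey2 : ∀ k, ∑ i, pdx (fun z => u z i) x k * lapx (fun z => u z i) x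
      = R x ^ 2 * ∑ i, pdx (fun z => S z i) x k * lapx (fun z => S z i) x
        + R x * (2 * ∑ j, (∑ i, pdx (fun z => S z i) x k * pdx (fun z => S z i) x j) * pdx R x j
          + (∑ i, S x i * lapx (fun z => S z i) x) * pdx R x k)
        + lapx R x * pdx R x k := by
    intro k
    obtain ⟨T, hT⟩ : ∃ T : Fin n → ℝ,
        ∀ i, T i = ∑ j, pdx (fun z => S z i) x j * pdx R x j := ⟨_, fun _ => rfl⟩
    obtain ⟨L, hL⟩ : ∃ L : Fin n → ℝ,
        ∀ i, L i = lapx (fun z => S z i) x := ⟨_, fun _ => rfl⟩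
    have step1 : ∑ i, pdx (fun z => u z i) x k * lapx (fun z => u z i) x
        = ∑ i, (pdx R x k * S x i + R x * pdx (fun z => S z i) x k)
            * (R x * L i + 2 * T i + lapx R x * S x i) :=
      Finset.sum_congr rfl fun i _ => by rw [hd1 x hx i k, hlapu i, hL, hT]
    rw [step1]
    have step2 : ∑ i, (pdx R x k * S x i + R x * pdx (fun z => S z i) x k)
            * (R x * L i + 2 * T i + lapx R x * S x i)
        = (R x * pdx R x k) * (∑ i, S x i * L i)
          + (2 * pdx R x k) * (∑ i, S x i * T i)
          + (lapx R x * pdx R x k) * (∑ i, S x i ^ 2)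
          + R x ^ 2 * (∑ i, pdx (fun z => S z i) x k * L i)
          + 2 * R x * (∑ i, pdx (fun z => S z i) x k * T i)
          + (R x * lapx R x) * (∑ i, S x i * pdx (fun z => S z i) x k) := by
      simp only [Finset.mul_sum, ← Finset.sum_add_distrib]
      exact Finset.sum_congr rfl fun i _ => by ring
    rw [step2, hE1, hE2 k]
    have hT0 : ∑ i, S x i * T i = 0 := by
      rw [Finset.sum_congr rfl fun i (_ : i ∈ Finset.univ) => by rw [hT i]]
      exact hE3
    have hTs : ∑ i, pdx (fun z => S z i) x k * T i
        = ∑ j, (∑ i, pdx (fun z => S z i) x k * pdx (fun z => S z i) x j) * pdx R x j := by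
      have h1 : ∀ i : Fin n, pdx (fun z => S z i) x k * T i
          = ∑ j, (pdx (fun z => S z i) x k * pdx (fun z => S z i) x j) * pdx R x j := by
        intro i
        rw [hT i, Finset.mul_sum]
        exact Finset.sum_congr rfl fun j _ => by ring
      rw [Finset.sum_congr rfl fun i _ => h1 i, Finset.sum_comm]
      exact Finset.sum_congr rfl fun j _ => (Finset.sum_mul _ _ _).symm
    have hLs : ∑ i, S x i * L i = ∑ i, S x i * lapx (fun z => S z i) x :=
      Finset.sum_congr rfl fun i _ => by rw [hL]
    have hLa : ∑ i, pdx (fun z => S z i) x k * L i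
        = ∑ i, pdx (fun z => S z i) x k * lapx (fun z => S z i) x :=
      Finset.sum_congr rfl fun i _ => by rw [hL]
    rw [hT0, hTs, hLs, hLa]
    ring
  -- key scalar identity for part (iii)
  have hj : ∀ k j, ∑ i, 2 * (pdx (fun z => u z i) x j
        * pdx (fun z => pdx (fun w => u w i) z j) x k)
      = 2 * (pdx (fun z => pdx R z j) x k * pdx R x j)
        + 2 * R x * pdx R x k * (∑ i, pdx (fun z => S z i) x j ^ 2)
        + 2 * R x ^ 2 * (∑ i, pdx (fun z => pdx (fun w => S w i) z j) x k
            * pdx (fun z => S z i) x j) := by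
    intro k j
    have e : ∑ i, 2 * (pdx (fun z => u z i) x j
          * pdx (fun z => pdx (fun w => u w i) z j) x k)
        = 2 * (pdx (fun z => pdx R z j) x k * pdx R x j) * (∑ i, S x i ^ 2)
          + 2 * pdx R x j ^ 2 * (∑ i, S x i * pdx (fun z => S z i) x k)
          + (2 * (pdx R x j * pdx R x k) + 2 * (R x * pdx (fun z => pdx R z j) x k))
              * (∑ i, S x i * pdx (fun z => S z i) x j)
          + 2 * (R x * pdx R x j)
              * (∑ i, S x i * pdx (fun z => pdx (fun w => S w i) z j) x k)
          + 2 * (R x * pdx R x j)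
              * (∑ i, pdx (fun z => S z i) x k * pdx (fun z => S z i) x j)
          + 2 * (R x * pdx R x k) * (∑ i, pdx (fun z => S z i) x j ^ 2)
          + 2 * R x ^ 2 * (∑ i, pdx (fun z => pdx (fun w => S w i) z j) x k
              * pdx (fun z => S z i) x j) := by
      rw [Finset.sum_congr rfl fun i (_ : i ∈ Finset.univ) => by rw [hd1 x hx i j, hd2 i j k]]
      simp only [Finset.mul_sum, ← Finset.sum_add_distrib]
      exact Finset.sum_congr rfl fun i _ => by ring
    rw [e, hE1, hE2 j, hE2 k, hE4 j k]
    ring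
  have hkey3 : ∀ k, pdx (fun z => frob2 (gradm u z)) x k
      = 2 * R x * (∑ i, ∑ j, pdx (fun z => S z i) x j ^ 2) * pdx R x k
        + 2 * R x ^ 2 * (∑ i, ∑ j, pdx (fun z => pdx (fun w => S w i) z j) x k
            * pdx (fun z => S z i) x j)
        + 2 * (∑ j, pdx (fun z => pdx R z j) x k * pdx R x j) := by
    intro k
    have hLfrob : pdx (fun z => frob2 (gradm u z)) x k
        = ∑ i, ∑ j, 2 * (pdx (fun z => u z i) x j
            * pdx (fun z => pdx (fun w => u w i) z j) x k) := by
      have e1 : (fun z => frob2 (gradm u z))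
          = fun z => ∑ i, ∑ j, (pdx (fun w => u w i) z j) ^ 2 := rfl
      rw [e1, pdx_sum Finset.univ _
        (fun i _ => DifferentiableAt.fun_sum fun j _ => (hud1 i j).fun_pow 2) k]
      refine Finset.sum_congr rfl fun i _ => ?_
      rw [pdx_sum Finset.univ _ (fun j _ => (hud1 i j).fun_pow 2) k]
      exact Finset.sum_congr rfl fun j _ => pdx_sq (hud1 i j) k
    rw [hLfrob, Finset.sum_comm, Finset.sum_congr rfl fun j (_ : j ∈ Finset.univ) => hj k j]
    have q : ∑ j : Fin n, ∑ i : Fin n, pdx (fun z => S z i) x j ^ 2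
        = ∑ i : Fin n, ∑ j : Fin n, pdx (fun z => S z i) x j ^ 2 := Finset.sum_comm
    have w : ∑ j : Fin n, ∑ i : Fin n, pdx (fun z => pdx (fun w => S w i) z j) x k
          * pdx (fun z => S z i) x j
        = ∑ i : Fin n, ∑ j : Fin n, pdx (fun z => pdx (fun w => S w i) z j) x k
          * pdx (fun z => S z i) x j := Finset.sum_comm
    rw [Finset.sum_add_distrib, Finset.sum_add_distrib, ← Finset.mul_sum, ← Finset.mul_sum,
      ← Finset.mul_sum, q, w]
    ring
  refine ⟨?_, ?_, ?_⟩
  · funext i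
    exact hlapu i
  · have hM : ((((2:ℝ) • (DSᵀ * DS)
        + (S x ⬝ᵥ lapv S x) • (1 : Matrix (Fin n) (Fin n) ℝ))) *ᵥ gR)
        = (2:ℝ) • ((DSᵀ * DS) *ᵥ gR) + (S x ⬝ᵥ lapv S x) • gR := by
      rw [Matrix.add_mulVec, Matrix.smul_mulVec, Matrix.smul_mulVec,
        Matrix.one_mulVec]
    rw [hM]
    funext k
    exact hkey2 k
  · funext k
    exact hkey3 k
end

section
/- Assume u(x) = Q(y(x)) x where Q is an SO(n)-valued matrix field of class C¹ depending only on the 2-plane radial variables y = (y_1,…,y_N), and let X[u] = [∇u]ᵗ[∇u] − I_n, Y[u] = [∇u][∇u]ᵗ − I_n. Then: (i) X[u] = Σ_{ℓ=1}^N [Qᵗ∂_ℓQ x ⊗ ∇y_ℓ + ∇y_ℓ ⊗ Qᵗ∂_ℓQ x] + Σ_{ℓ=1}^N Σ_{k=1}^N ⟨∂_ℓQ x, ∂_kQ x⟩ ∇y_ℓ ⊗ ∇y_k; (ii) Y[u] = Σ_{ℓ=1}^N [Q∇y_ℓ ⊗ ∂_ℓQ x + ∂_ℓQ x ⊗ Q∇y_ℓ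 + ∂_ℓQ x ⊗ ∂_ℓQ x]; (iii) X[u]∇(|u|²) = 2[Σ_{ℓ=1}^N ⟨∇y_ℓ, x⟩ Qᵗ∂_ℓQ x + Σ_{ℓ=1}^N Σ_{k=1}^N ⟨∂_ℓQ x, ∂_kQ x⟩ ⟨∇y_k, x⟩ ∇y_ℓ]. -/
open scoped BigOperators
open Matrix

noncomputable section
def gradCLM {n : ℕ} (v : Fin n → ℝ) : (Fin n → ℝ) →L[ℝ] ℝ :=
  ∑ j, v j • ContinuousLinearMap.proj j

lemma gradCLM_apply {n : ℕ} (v w : Fin n → ℝ) : gradCLM v w = ∑ j, v j * w j := by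
  simp [gradCLM]

lemma gradCLM_single {n : ℕ} (v : Fin n → ℝ) (j : Fin n) :
    gradCLM v (Pi.single j 1) = v j := by
  simp [gradCLM_apply, Pi.single_apply]

lemma clm_eq_sum_single {N : ℕ} (L : (Fin N → ℝ) →L[ℝ] ℝ) (v : Fin N → ℝ) :
    L v = ∑ ℓ, v ℓ * L (Pi.single ℓ 1) := by
  conv_lhs => rw [show v = ∑ ℓ, v ℓ • (Pi.single ℓ 1 : Fin N → ℝ) by
    funext j; simp [Pi.single_apply]]
  rw [map_sum]
  simp [smul_eq_mul]
end
noncomputable section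
lemma mul_vecMulVec {n : ℕ} (M : Matrix (Fin n) (Fin n) ℝ) (a b : Fin n → ℝ) :
    M * vecMulVec a b = vecMulVec (M *ᵥ a) b := by
  ext i j
  simp [Matrix.mul_apply, vecMulVec_apply, Matrix.mulVec, dotProduct,
    Finset.sum_mul, mul_assoc]

lemma vecMulVec_mul {n : ℕ} (a b : Fin n → ℝ) (M : Matrix (Fin n) (Fin n) ℝ) :
    vecMulVec a b * M = vecMulVec a (Mᵀ *ᵥ b) := by
  ext i j
  simp only [Matrix.mul_apply, vecMulVec_apply, Matrix.mulVec, dotProduct,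
    Matrix.transpose_apply, Finset.mul_sum]
  exact Finset.sum_congr rfl fun k _ => by ring

lemma transpose_vecMulVec {n : ℕ} (a b : Fin n → ℝ) :
    (vecMulVec a b)ᵀ = vecMulVec b a := by
  ext i j; simp [vecMulVec_apply, mul_comm]

lemma vecMulVec_mulVec {n : ℕ} (a b v : Fin n → ℝ) :
    vecMulVec a b *ᵥ v = (b ⬝ᵥ v) • a := by
  funext i
  simp only [vecMulVec_apply, Matrix.mulVec, dotProduct, Pi.smul_apply,
    smul_eq_mul, Finset.sum_mul]
  exact Finset.sum_congr rfl fun k _ => by ring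

lemma sum_mulVec {n N : ℕ} (M : Fin N → Matrix (Fin n) (Fin n) ℝ) (v : Fin n → ℝ) :
    (∑ ℓ, M ℓ) *ᵥ v = ∑ ℓ, (M ℓ *ᵥ v) := by
  funext i
  simp [Matrix.mulVec, dotProduct, Matrix.sum_apply, Finset.sum_mul]
  rw [Finset.sum_comm]

lemma vecMulVec_mul_vecMulVec {n : ℕ} (a b c d : Fin n → ℝ) :
    vecMulVec a b * vecMulVec c d = (b ⬝ᵥ c) • vecMulVec a d := by
  ext i j
  simp only [Matrix.mul_apply, vecMulVec_apply, dotProduct, Matrix.smul_apply,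
    smul_eq_mul, Finset.sum_mul]
  exact Finset.sum_congr rfl fun k _ => by ring
end
-- yvar gradient
open Matrix
noncomputable section
def gyE {n : ℕ} (x : Fin n → ℝ) (ℓ : Fin ((n+1)/2)) : Fin n → ℝ := fun j =>
  if h : 2*(ℓ:ℕ)+1 < n then
    (if (j:ℕ) = 2*(ℓ:ℕ) ∨ (j:ℕ) = 2*(ℓ:ℕ)+1 then x j / yvar x ℓ else 0)
  else (if (j:ℕ) = n - 1 then 1 else 0)

lemma gradCLM_apply' {n : ℕ} (v w : Fin n → ℝ) :
    (∑ j, v j • ContinuousLinearMap.proj (R := ℝ) (φ := fun _ : Fin n => ℝ) j) w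
      = ∑ j, v j * w j := by
  simp

lemma hasFDerivAt_yvar {n : ℕ} (x : Fin n → ℝ) (ℓ : Fin ((n+1)/2))
    (hx : 2*(ℓ:ℕ)+1 < n → 0 < yvar x ℓ) :
    HasFDerivAt (fun z => yvar z ℓ)
      (∑ j, gyE x ℓ j • ContinuousLinearMap.proj (R := ℝ) (φ := fun _ : Fin n => ℝ) j) x := by
  by_cases h : 2*(ℓ:ℕ)+1 < n
  · set a : Fin n := ⟨2*(ℓ:ℕ), by omega⟩
    set b : Fin n := ⟨2*(ℓ:ℕ)+1, h⟩
    have hab : a ≠ b := by simp [a, b, Fin.ext_iff]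
    have hy : 0 < yvar x ℓ := hx h
    have hr : yvar x ℓ = Real.sqrt (x a ^ 2 + x b ^ 2) := by
      simp [yvar, dif_pos h]; rfl
    have hs : (0:ℝ) < x a ^ 2 + x b ^ 2 := by
      by_contra hc
      push_neg at hc
      have : x a ^ 2 + x b ^ 2 = 0 := le_antisymm hc (by positivity)
      rw [hr, this] at hy; simp at hy
    have hpa := hasFDerivAt_apply (𝕜 := ℝ) a x
    have hpb := hasFDerivAt_apply (𝕜 := ℝ) b x
    have h1 : HasFDerivAt (fun z : Fin n → ℝ => z a ^ 2 + z b ^ 2)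
        ((x a • ContinuousLinearMap.proj (R := ℝ) (φ := fun _ : Fin n => ℝ) a
            + x a • ContinuousLinearMap.proj a)
          + (x b • ContinuousLinearMap.proj b + x b • ContinuousLinearMap.proj b)) x := by
      have := (hpa.fun_mul hpa).fun_add (hpb.fun_mul hpb)
      simpa [pow_two] using this
    have h2 : HasDerivAt Real.sqrt (1 / (2 * Real.sqrt (x a ^ 2 + x b ^ 2)))
        (x a ^ 2 + x b ^ 2) := Real.hasDerivAt_sqrt (ne_of_gt hs)
    have h3 := h2.comp_hasFDerivAt x h1
    have hfun : (fun z : Fin n → ℝ => yvar z ℓ)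
        = fun z => Real.sqrt (z a ^ 2 + z b ^ 2) := by
      funext z; simp [yvar, dif_pos h]; rfl
    rw [hfun]
    refine h3.congr_fderiv ?_
    ext v
    rw [gradCLM_apply']
    have hval : ∀ j : Fin n, gyE x ℓ j =
        if j = a then x a / yvar x ℓ else if j = b then x b / yvar x ℓ else 0 := by
      intro j
      simp only [gyE, dif_pos h]
      by_cases hja : j = a
      · subst hja; simp [a]
      · by_cases hjb : j = b
        · subst hjb
          rw [if_pos (Or.inr rfl), if_neg hja, if_pos rfl]
        · rw [if_neg hja, if_neg hjb, if_neg]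
          rintro (hc | hc)
          · exact hja (Fin.ext hc)
          · exact hjb (Fin.ext hc)
    have : ∀ j : Fin n, gyE x ℓ j * v j =
        (if j = a then x a / yvar x ℓ * v a else 0)
          + (if j = b then x b / yvar x ℓ * v b else 0) := by
      intro j
      rw [hval j]
      by_cases hja : j = a
      · subst hja; simp [hab]
      · by_cases hjb : j = b
        · subst hjb; simp [hja]
        · simp [hja, hjb]
    rw [Finset.sum_congr rfl (fun j _ => this j), Finset.sum_add_distrib,
      Finset.sum_ite_eq', Finset.sum_ite_eq']
    simp only [Finset.mem_univ, if_pos]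
    have hyne : yvar x ℓ ≠ 0 := ne_of_gt hy
    rw [hr]
    simp only [ContinuousLinearMap.smul_apply, ContinuousLinearMap.add_apply,
      ContinuousLinearMap.proj_apply, smul_eq_mul]
    have hsne : Real.sqrt (x a ^ 2 + x b ^ 2) ≠ 0 := hr ▸ hyne
    field_simp
    ring
  · have hrw : (fun z : Fin n → ℝ => yvar z ℓ)
        = fun z => z ⟨n - 1, by have := ℓ.isLt; omega⟩ := by
      funext z; simp [yvar, dif_neg h]
    rw [hrw]
    have h1 := hasFDerivAt_apply (𝕜 := ℝ) (⟨n - 1, by have := ℓ.isLt; omega⟩ : Fin n) x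
    refine h1.congr_fderiv ?_
    ext v
    rw [gradCLM_apply']
    have : ∀ j : Fin n, gyE x ℓ j * v j =
        if j = (⟨n - 1, by have := ℓ.isLt; omega⟩ : Fin n) then
          v ⟨n - 1, by have := ℓ.isLt; omega⟩ else 0 := by
      intro j
      simp only [gyE, dif_neg h]
      by_cases hj : (j:ℕ) = n - 1
      · have hje : j = (⟨n - 1, by have := ℓ.isLt; omega⟩ : Fin n) := Fin.ext hj
        rw [if_pos hj, if_pos hje, hje]
        simp
      · rw [if_neg hj, if_neg (fun hc => hj (by rw [hc]))]
        simp
    rw [Finset.sum_congr rfl (fun j _ => this j), Finset.sum_ite_eq']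
    simp
end
noncomputable section
lemma pdx_eq {m : ℕ} {g : (Fin m → ℝ) → ℝ} {x : Fin m → ℝ}
    {L : (Fin m → ℝ) →L[ℝ] ℝ} (h : HasFDerivAt g L x) (j : Fin m) :
    pdx g x j = L (Pi.single j 1) := by
  rw [pdx, h.fderiv]

lemma sum_gyE_mul {n : ℕ} (x : Fin n → ℝ) (ℓ : Fin ((n+1)/2)) (w : Fin n → ℝ) :
    (∑ j, gyE x ℓ j • ContinuousLinearMap.proj (R := ℝ) (φ := fun _ : Fin n => ℝ) j) w
      = ∑ j, gyE x ℓ j * w j := by simp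

lemma gradx_yvar {n : ℕ} (x : Fin n → ℝ) (ℓ : Fin ((n+1)/2))
    (hx : 2*(ℓ:ℕ)+1 < n → 0 < yvar x ℓ) :
    gradx (fun z => yvar z ℓ) x = gyE x ℓ := by
  funext j
  rw [gradx, pdx_eq (hasFDerivAt_yvar x ℓ hx) j, sum_gyE_mul]
  simp [Pi.single_apply]

lemma gyE_ortho {n : ℕ} (x : Fin n → ℝ) (ℓ k : Fin ((n+1)/2))
    (hx : ∀ m : Fin ((n+1)/2), 2*(m:ℕ)+1 < n → 0 < yvar x m) :
    gyE x ℓ ⬝ᵥ gyE x k = if ℓ = k then 1 else 0 := by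
  by_cases hlk : ℓ = k
  · subst hlk
    rw [if_pos rfl]
    by_cases h : 2*(ℓ:ℕ)+1 < n
    · set a : Fin n := ⟨2*(ℓ:ℕ), by omega⟩
      set b : Fin n := ⟨2*(ℓ:ℕ)+1, h⟩
      have hab : a ≠ b := by simp [a, b, Fin.ext_iff]
      have hy : 0 < yvar x ℓ := hx ℓ h
      have hr : yvar x ℓ = Real.sqrt (x a ^ 2 + x b ^ 2) := by
        simp [yvar, dif_pos h]; rfl
      have hval : ∀ j : Fin n, gyE x ℓ j =
          if j = a then x a / yvar x ℓ else if j = b then x b / yvar x ℓ else 0 := by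
        intro j
        simp only [gyE, dif_pos h]
        by_cases hja : j = a
        · subst hja; simp [a]
        · by_cases hjb : j = b
          · subst hjb
            rw [if_pos (Or.inr rfl), if_neg hja, if_pos rfl]
          · rw [if_neg hja, if_neg hjb, if_neg]
            rintro (hc | hc)
            · exact hja (Fin.ext hc)
            · exact hjb (Fin.ext hc)
      have hsum : ∀ j : Fin n, gyE x ℓ j * gyE x ℓ j =
          (if j = a then (x a / yvar x ℓ)^2 else 0)
            + (if j = b then (x b / yvar x ℓ)^2 else 0) := by
        intro j
        rw [hval j]
        by_cases hja : j = a
        · subst hja; simp [hab]; ring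
        · by_cases hjb : j = b
          · subst hjb; simp [hja]; ring
          · simp [hja, hjb]
      rw [dotProduct, Finset.sum_congr rfl (fun j _ => hsum j),
        Finset.sum_add_distrib, Finset.sum_ite_eq', Finset.sum_ite_eq']
      simp only [Finset.mem_univ, if_pos]
      have h2 : (0:ℝ) < x a ^ 2 + x b ^ 2 := by
        by_contra hc
        push_neg at hc
        have : x a ^ 2 + x b ^ 2 = 0 := le_antisymm hc (by positivity)
        rw [hr, this] at hy; simp at hy
      have hsq : yvar x ℓ ^ 2 = x a ^ 2 + x b ^ 2 := by
        rw [hr]; exact Real.sq_sqrt (le_of_lt h2)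
      field_simp
      rw [hsq]
    · set c : Fin n := ⟨n - 1, by have := ℓ.isLt; omega⟩
      have hval : ∀ j : Fin n, gyE x ℓ j = if j = c then 1 else 0 := by
        intro j
        simp only [gyE, dif_neg h]
        by_cases hj : (j:ℕ) = n - 1
        · rw [if_pos hj, if_pos (Fin.ext hj)]
        · rw [if_neg hj, if_neg (fun hc => hj (by rw [hc]))]
      have hsum : ∀ j, gyE x ℓ j * gyE x ℓ j = if j = c then 1 else 0 := by
        intro j; rw [hval j]; by_cases hj : j = c <;> simp [hj]
      rw [dotProduct, Finset.sum_congr rfl fun j _ => hsum j, Finset.sum_ite_eq']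
      simp
  · rw [if_neg hlk, dotProduct]
    apply Finset.sum_eq_zero
    intro j _
    have hz : gyE x ℓ j = 0 ∨ gyE x k j = 0 := by
      by_contra hc
      push_neg at hc
      obtain ⟨h1, h2⟩ := hc
      have e1 : (2*(ℓ:ℕ)+1 < n ∧ ((j:ℕ) = 2*(ℓ:ℕ) ∨ (j:ℕ) = 2*(ℓ:ℕ)+1))
          ∨ (¬(2*(ℓ:ℕ)+1 < n) ∧ (j:ℕ) = n - 1) := by
        by_cases hl : 2*(ℓ:ℕ)+1 < n
        · left
          refine ⟨hl, ?_⟩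
          by_contra hcc
          simp only [gyE, dif_pos hl, if_neg hcc] at h1
          exact h1 rfl
        · right
          refine ⟨hl, ?_⟩
          by_contra hcc
          simp only [gyE, dif_neg hl, if_neg hcc] at h1
          exact h1 rfl
      have e2 : (2*(k:ℕ)+1 < n ∧ ((j:ℕ) = 2*(k:ℕ) ∨ (j:ℕ) = 2*(k:ℕ)+1))
          ∨ (¬(2*(k:ℕ)+1 < n) ∧ (j:ℕ) = n - 1) := by
        by_cases hl : 2*(k:ℕ)+1 < n
        · left
          refine ⟨hl, ?_⟩
          by_contra hcc
          simp only [gyE, dif_pos hl, if_neg hcc] at h2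
          exact h2 rfl
        · right
          refine ⟨hl, ?_⟩
          by_contra hcc
          simp only [gyE, dif_neg hl, if_neg hcc] at h2
          exact h2 rfl
      have hℓk : (ℓ:ℕ) ≠ (k:ℕ) := fun hc => hlk (Fin.ext hc)
      have hℓlt := ℓ.isLt
      have hklt := k.isLt
      omega
    rcases hz with hz | hz <;> rw [hz] <;> ring
end
noncomputable section
lemma Dyv_single {n : ℕ} (x : Fin n → ℝ) (j : Fin n) (ℓ : Fin ((n+1)/2)) :
    (ContinuousLinearMap.pi fun m : Fin ((n+1)/2) =>
        ∑ i, gyE x m i • ContinuousLinearMap.proj (R := ℝ) (φ := fun _ : Fin n => ℝ) i)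
      (Pi.single j 1) ℓ = gyE x ℓ j := by
  rw [ContinuousLinearMap.pi_apply, sum_gyE_mul]
  simp [Pi.single_apply]

lemma hasFDerivAt_yv {n : ℕ} (x : Fin n → ℝ)
    (hx : ∀ m : Fin ((n+1)/2), 2*(m:ℕ)+1 < n → 0 < yvar x m) :
    HasFDerivAt (yv (n := n))
      (ContinuousLinearMap.pi fun m : Fin ((n+1)/2) =>
        ∑ i, gyE x m i • ContinuousLinearMap.proj (R := ℝ) (φ := fun _ : Fin n => ℝ) i) x := by
  exact hasFDerivAt_pi.2 fun ℓ => hasFDerivAt_yvar x ℓ (hx ℓ)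

lemma pdx_comp_yv {n : ℕ} (x : Fin n → ℝ)
    (hx : ∀ m : Fin ((n+1)/2), 2*(m:ℕ)+1 < n → 0 < yvar x m)
    {g : (Fin ((n+1)/2) → ℝ) → ℝ} (hg : DifferentiableAt ℝ g (yv x)) (j : Fin n) :
    pdx (fun z => g (yv z)) x j = ∑ ℓ, gyE x ℓ j * pdx g (yv x) ℓ := by
  have hc : HasFDerivAt (fun z => g (yv z)) _ x :=
    hg.hasFDerivAt.comp x (hasFDerivAt_yv x hx)
  rw [pdx_eq hc j, ContinuousLinearMap.comp_apply,
    clm_eq_sum_single (fderiv ℝ g (yv x))]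
  exact Finset.sum_congr rfl fun ℓ _ => by rw [Dyv_single, pdx]

lemma gradm_eq {n : ℕ}
    (Q : (Fin ((n+1)/2) → ℝ) → Matrix (Fin n) (Fin n) ℝ)
    (hQreg : ∀ i j, ContDiff ℝ 1 fun y => Q y i j)
    (u : (Fin n → ℝ) → Fin n → ℝ)
    (hu : ∀ z, u z = Q (yv z) *ᵥ z)
    (x : Fin n → ℝ)
    (hx : ∀ ℓ : Fin ((n+1)/2), 2*(ℓ:ℕ)+1 < n → 0 < yvar x ℓ) :
    gradm u x = Q (yv x) + ∑ ℓ, vecMulVec (pdM Q (yv x) ℓ *ᵥ x) (gyE x ℓ) := by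
  ext i j
  have hreg : ∀ k, DifferentiableAt ℝ (fun y => Q y i k) (yv x) :=
    fun k => ((hQreg i k).differentiable one_ne_zero).differentiableAt
  -- derivative of each summand
  have hQc : ∀ k : Fin n, HasFDerivAt (fun z => Q (yv z) i k)
      ((fderiv ℝ (fun y => Q y i k) (yv x)).comp
        (ContinuousLinearMap.pi fun m : Fin ((n+1)/2) =>
          ∑ i', gyE x m i' • ContinuousLinearMap.proj (R := ℝ) (φ := fun _ : Fin n => ℝ) i')) x :=
    fun k => (hreg k).hasFDerivAt.comp x (hasFDerivAt_yv x hx)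
  have hcomp : HasFDerivAt (fun z => ∑ k, Q (yv z) i k * z k)
      (∑ k, ((Q (yv x) i k) • ContinuousLinearMap.proj k + (x k) •
        ((fderiv ℝ (fun y => Q y i k) (yv x)).comp
          (ContinuousLinearMap.pi fun m : Fin ((n+1)/2) =>
            ∑ i', gyE x m i' • ContinuousLinearMap.proj (R := ℝ) (φ := fun _ : Fin n => ℝ) i')))) x := by
    exact HasFDerivAt.fun_sum fun k _ => (hQc k).mul (hasFDerivAt_apply (𝕜 := ℝ) k x)
  have hui : (fun z => u z i) = fun z => ∑ k, Q (yv z) i k * z k := by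
    funext z; rw [hu z]; rfl
  rw [gradm, Matrix.of_apply, hui, pdx_eq hcomp j]
  rw [ContinuousLinearMap.sum_apply]
  have hterm : ∀ k : Fin n,
      ((Q (yv x) i k) • ContinuousLinearMap.proj (R := ℝ) (φ := fun _ : Fin n => ℝ) k + (x k) •
        ((fderiv ℝ (fun y => Q y i k) (yv x)).comp
          (ContinuousLinearMap.pi fun m : Fin ((n+1)/2) =>
            ∑ i', gyE x m i' • ContinuousLinearMap.proj (R := ℝ) (φ := fun _ : Fin n => ℝ) i')))
        (Pi.single j 1)
      = Q (yv x) i k * (if j = k then 1 else 0)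
        + x k * ∑ ℓ, gyE x ℓ j * pdM Q (yv x) ℓ i k := by
    intro k
    rw [ContinuousLinearMap.add_apply, ContinuousLinearMap.smul_apply,
      ContinuousLinearMap.smul_apply, ContinuousLinearMap.comp_apply,
      clm_eq_sum_single (fderiv ℝ (fun y => Q y i k) (yv x))]
    congr 1
    · simp [Pi.single_apply, eq_comm]
    · rw [smul_eq_mul]
      congr 1
      exact Finset.sum_congr rfl fun ℓ _ => by
        rw [Dyv_single]; rfl
  rw [Finset.sum_congr rfl fun k _ => hterm k, Finset.sum_add_distrib]
  have h1 : ∑ k, Q (yv x) i k * (if j = k then 1 else 0) = Q (yv x) i j := by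
    simp
  rw [h1]
  have h2 : ∑ k, x k * ∑ ℓ, gyE x ℓ j * pdM Q (yv x) ℓ i k
      = ∑ ℓ, (pdM Q (yv x) ℓ *ᵥ x) i * gyE x ℓ j := by
    simp only [Finset.mul_sum]
    rw [Finset.sum_comm]
    refine Finset.sum_congr rfl fun ℓ _ => ?_
    simp only [Matrix.mulVec, dotProduct, Finset.sum_mul]
    exact Finset.sum_congr rfl fun k _ => by ring
  rw [h2]
  simp [Matrix.sum_apply, vecMulVec_apply]
end
noncomputable section
lemma antisym_Q {n : ℕ}
    (Q : (Fin ((n+1)/2) → ℝ) → Matrix (Fin n) (Fin n) ℝ)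
    (hQreg : ∀ i j, ContDiff ℝ 1 fun y => Q y i j)
    (hQSO : ∀ y, (Q y)ᵀ * Q y = 1)
    (y0 : Fin ((n+1)/2) → ℝ) (ℓ : Fin ((n+1)/2)) :
    (Q y0)ᵀ * pdM Q y0 ℓ + ((Q y0)ᵀ * pdM Q y0 ℓ)ᵀ = 0 := by
  ext i j
  have hreg : ∀ a b, DifferentiableAt ℝ (fun y => Q y a b) y0 :=
    fun a b => ((hQreg a b).differentiable one_ne_zero).differentiableAt
  have hF : HasFDerivAt (fun y => ∑ m, Q y m i * Q y m j)
      (∑ m, ((Q y0 m i) • fderiv ℝ (fun y => Q y m j) y0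
        + (Q y0 m j) • fderiv ℝ (fun y => Q y m i) y0)) y0 :=
    HasFDerivAt.fun_sum fun m _ => (hreg m i).hasFDerivAt.mul (hreg m j).hasFDerivAt
  have hconst : (fun y => ∑ m, Q y m i * Q y m j) = fun _ => (1 : Matrix (Fin n) (Fin n) ℝ) i j := by
    funext y
    have := hQSO y
    calc ∑ m, Q y m i * Q y m j = ((Q y)ᵀ * Q y) i j := by
          simp [Matrix.mul_apply, Matrix.transpose_apply]
      _ = (1 : Matrix (Fin n) (Fin n) ℝ) i j := by rw [this]
  have hzero : HasFDerivAt (fun y => ∑ m, Q y m i * Q y m j)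
      (0 : (Fin ((n+1)/2) → ℝ) →L[ℝ] ℝ) y0 := by
    rw [hconst]; exact hasFDerivAt_const _ _
  have huniq := hF.unique hzero
  have happ := congrArg (fun L => L (Pi.single ℓ 1)) huniq
  simp only [ContinuousLinearMap.sum_apply, ContinuousLinearMap.add_apply,
    ContinuousLinearMap.smul_apply, ContinuousLinearMap.zero_apply, smul_eq_mul] at happ
  have : ((Q y0)ᵀ * pdM Q y0 ℓ + ((Q y0)ᵀ * pdM Q y0 ℓ)ᵀ) i j
      = ∑ m, (Q y0 m i * fderiv ℝ (fun y => Q y m j) y0 (Pi.single ℓ 1)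
        + Q y0 m j * fderiv ℝ (fun y => Q y m i) y0 (Pi.single ℓ 1)) := by
    simp only [Matrix.add_apply, Matrix.transpose_apply, Matrix.mul_apply,
      pdM, Matrix.of_apply, pdx, Finset.sum_add_distrib]
  rw [this, happ]
  rfl

lemma norm2_u_eq {n : ℕ}
    (Q : (Fin ((n+1)/2) → ℝ) → Matrix (Fin n) (Fin n) ℝ)
    (hQSO : ∀ y, (Q y)ᵀ * Q y = 1)
    (u : (Fin n → ℝ) → Fin n → ℝ)
    (hu : ∀ z, u z = Q (yv z) *ᵥ z) (z : Fin n → ℝ) :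
    norm2 (u z) = norm2 z := by
  have hdot : ∀ v : Fin n → ℝ, norm2 v = v ⬝ᵥ v := by
    intro v; simp [norm2, dotProduct, pow_two]
  rw [hdot, hdot, hu z, Matrix.dotProduct_mulVec, ← Matrix.mulVec_transpose,
    Matrix.mulVec_mulVec, hQSO, Matrix.one_mulVec]

lemma gradx_norm2 {n : ℕ} (x : Fin n → ℝ) :
    gradx (fun z : Fin n → ℝ => norm2 z) x = fun j => 2 * x j := by
  funext j
  have h : HasFDerivAt (fun z : Fin n → ℝ => ∑ i, z i ^ 2)
      (∑ i, (x i • ContinuousLinearMap.proj (R := ℝ) (φ := fun _ : Fin n => ℝ) i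
        + x i • ContinuousLinearMap.proj i)) x := by
    refine HasFDerivAt.fun_sum fun i _ => ?_
    have hp := hasFDerivAt_apply (𝕜 := ℝ) i x
    simpa [pow_two] using hp.fun_mul hp
  have h' : HasFDerivAt (fun z : Fin n → ℝ => norm2 z) _ x := h
  rw [gradx, pdx_eq h' j]
  simp [Pi.single_apply]
  rw [Finset.sum_add_distrib, Finset.sum_ite_eq']
  simp
  ring
end
/-- Lemma 3.7: identities for `X[u]`, `Y[u]` and `X[u]∇(|u|²)` for a map
`u(x) = Q(y(x)) x` with `Q` an `SO(n)`-valued `C¹` matrix field of the 2-plane radial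
variables. -/
theorem stmt4 (n : ℕ) (hn : 2 ≤ n)
    (Q : (Fin ((n+1)/2) → ℝ) → Matrix (Fin n) (Fin n) ℝ)
    (hQreg : ∀ i j, ContDiff ℝ 1 fun y => Q y i j)
    (hQSO : ∀ y, (Q y)ᵀ * Q y = 1 ∧ (Q y).det = 1)
    (u : (Fin n → ℝ) → Fin n → ℝ)
    (hu : ∀ z, u z = Q (yv z) *ᵥ z)
    (x : Fin n → ℝ)
    (hx : ∀ ℓ : Fin ((n+1)/2), 2*(ℓ:ℕ)+1 < n → 0 < yvar x ℓ) :
    let y0 := yv x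
    let gy : Fin ((n+1)/2) → Fin n → ℝ := fun ℓ => gradx (fun z => yvar z ℓ) x
    let X := (gradm u x)ᵀ * gradm u x - 1
    let Y := gradm u x * (gradm u x)ᵀ - 1
    -- (i)
    (X = (∑ ℓ, (vecMulVec (((Q y0)ᵀ * pdM Q y0 ℓ) *ᵥ x) (gy ℓ)
            + vecMulVec (gy ℓ) (((Q y0)ᵀ * pdM Q y0 ℓ) *ᵥ x)))
        + ∑ ℓ, ∑ k, ((pdM Q y0 ℓ *ᵥ x) ⬝ᵥ (pdM Q y0 k *ᵥ x)) • vecMulVec (gy ℓ) (gy k)) ∧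
    -- (ii)
    (Y = ∑ ℓ, (vecMulVec (Q y0 *ᵥ gy ℓ) (pdM Q y0 ℓ *ᵥ x)
            + vecMulVec (pdM Q y0 ℓ *ᵥ x) (Q y0 *ᵥ gy ℓ)
            + vecMulVec (pdM Q y0 ℓ *ᵥ x) (pdM Q y0 ℓ *ᵥ x))) ∧
    -- (iii)
    (X *ᵥ gradx (fun z => norm2 (u z)) x
      = (2:ℝ) • ((∑ ℓ, (gy ℓ ⬝ᵥ x) • (((Q y0)ᵀ * pdM Q y0 ℓ) *ᵥ x))
          + ∑ ℓ, ∑ k, (((pdM Q y0 ℓ *ᵥ x) ⬝ᵥ (pdM Q y0 k *ᵥ x)) * (gy k ⬝ᵥ x)) • gy ℓ)) := by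
  intro y0 gy X Y
  have hgy : gy = fun ℓ => gyE x ℓ := by
    funext ℓ; exact gradx_yvar x ℓ (hx ℓ)
  have hQ1 : ∀ y, (Q y)ᵀ * Q y = 1 := fun y => (hQSO y).1
  have hM : gradm u x = Q y0 + ∑ ℓ, vecMulVec (pdM Q y0 ℓ *ᵥ x) (gyE x ℓ) :=
    gradm_eq Q hQreg u hu x hx
  set P := Q y0 with hP
  set G : Fin ((n+1)/2) → Matrix (Fin n) (Fin n) ℝ := fun ℓ => pdM Q y0 ℓ with hG
  set a : Fin ((n+1)/2) → Fin n → ℝ := fun ℓ => G ℓ *ᵥ x with ha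
  set g : Fin ((n+1)/2) → Fin n → ℝ := fun ℓ => gyE x ℓ with hg
  set S : Matrix (Fin n) (Fin n) ℝ := ∑ ℓ, vecMulVec (a ℓ) (g ℓ) with hS
  have hPt : Pᵀ * P = 1 := hQ1 y0
  have hPPt : P * Pᵀ = 1 := mul_eq_one_comm.mp hPt
  have hSt : Sᵀ = ∑ ℓ, vecMulVec (g ℓ) (a ℓ) := by
    rw [hS, Matrix.transpose_sum]
    exact Finset.sum_congr rfl fun ℓ _ => _root_.transpose_vecMulVec _ _
  have hPta : ∀ ℓ, Pᵀ *ᵥ a ℓ = (Pᵀ * G ℓ) *ᵥ x := fun ℓ => Matrix.mulVec_mulVec x Pᵀ (G ℓ)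
  -- (i)
  have hXeq : X = (∑ ℓ, (vecMulVec ((Pᵀ * G ℓ) *ᵥ x) (g ℓ)
        + vecMulVec (g ℓ) ((Pᵀ * G ℓ) *ᵥ x)))
      + ∑ ℓ, ∑ k, ((a ℓ) ⬝ᵥ (a k)) • vecMulVec (g ℓ) (g k) := by
    show (gradm u x)ᵀ * gradm u x - 1 = _
    rw [hM]
    rw [Matrix.transpose_add, hSt, Matrix.add_mul, Matrix.mul_add, Matrix.mul_add, hPt]
    have e1 : Pᵀ * S = ∑ ℓ, vecMulVec ((Pᵀ * G ℓ) *ᵥ x) (g ℓ) := by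
      rw [hS, Matrix.mul_sum]
      exact Finset.sum_congr rfl fun ℓ _ => by rw [_root_.mul_vecMulVec, hPta ℓ]
    have e2 : (∑ ℓ, vecMulVec (g ℓ) (a ℓ)) * P = ∑ ℓ, vecMulVec (g ℓ) ((Pᵀ * G ℓ) *ᵥ x) := by
      rw [Matrix.sum_mul]
      exact Finset.sum_congr rfl fun ℓ _ => by rw [_root_.vecMulVec_mul, hPta ℓ]
    have e3 : (∑ ℓ, vecMulVec (g ℓ) (a ℓ)) * S
        = ∑ ℓ, ∑ k, ((a ℓ) ⬝ᵥ (a k)) • vecMulVec (g ℓ) (g k) := by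
      rw [hS, Matrix.sum_mul]
      refine Finset.sum_congr rfl fun ℓ _ => ?_
      rw [Matrix.mul_sum]
      exact Finset.sum_congr rfl fun k _ => _root_.vecMulVec_mul_vecMulVec _ _ _ _
    rw [e1, e2, e3, Finset.sum_add_distrib]
    abel
  refine ⟨?_, ?_, ?_⟩
  · rw [hgy]; exact hXeq
  -- (ii)
  · show gradm u x * (gradm u x)ᵀ - 1 = _
    rw [hM]
    rw [Matrix.transpose_add, hSt, Matrix.add_mul, Matrix.mul_add, Matrix.mul_add, hPPt]
    have e1 : P * (∑ ℓ, vecMulVec (g ℓ) (a ℓ)) = ∑ ℓ, vecMulVec (P *ᵥ g ℓ) (a ℓ) := by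
      rw [Matrix.mul_sum]
      exact Finset.sum_congr rfl fun ℓ _ => _root_.mul_vecMulVec _ _ _
    have e2 : S * Pᵀ = ∑ ℓ, vecMulVec (a ℓ) (P *ᵥ g ℓ) := by
      rw [hS, Matrix.sum_mul]
      refine Finset.sum_congr rfl fun ℓ _ => ?_
      rw [_root_.vecMulVec_mul, Matrix.transpose_transpose]
    have e3 : S * (∑ ℓ, vecMulVec (g ℓ) (a ℓ)) = ∑ ℓ, vecMulVec (a ℓ) (a ℓ) := by
      rw [hS, Matrix.sum_mul]
      have : ∀ ℓ, vecMulVec (a ℓ) (g ℓ) * (∑ k, vecMulVec (g k) (a k))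
          = vecMulVec (a ℓ) (a ℓ) := by
        intro ℓ
        rw [Matrix.mul_sum]
        have h1 : ∀ k, vecMulVec (a ℓ) (g ℓ) * vecMulVec (g k) (a k)
            = (if ℓ = k then (1:ℝ) else 0) • vecMulVec (a ℓ) (a k) := by
          intro k
          rw [_root_.vecMulVec_mul_vecMulVec, hg]
          rw [gyE_ortho x ℓ k hx]
        rw [Finset.sum_congr rfl fun k _ => h1 k]
        simp [ite_smul]
      exact Finset.sum_congr rfl fun ℓ _ => this ℓ
    rw [e1, e2, e3, hgy]
    rw [show (∑ ℓ, (vecMulVec (Q y0 *ᵥ (fun ℓ => gyE x ℓ) ℓ) (pdM Q y0 ℓ *ᵥ x)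
        + vecMulVec (pdM Q y0 ℓ *ᵥ x) (Q y0 *ᵥ (fun ℓ => gyE x ℓ) ℓ)
        + vecMulVec (pdM Q y0 ℓ *ᵥ x) (pdM Q y0 ℓ *ᵥ x)))
      = (∑ ℓ, vecMulVec (P *ᵥ g ℓ) (a ℓ)) + ((∑ ℓ, vecMulVec (a ℓ) (P *ᵥ g ℓ))
        + ∑ ℓ, vecMulVec (a ℓ) (a ℓ)) by
        rw [Finset.sum_add_distrib, Finset.sum_add_distrib]; abel]
    abel
  -- (iii)
  · have hn2 : gradx (fun z => norm2 (u z)) x = fun j => 2 * x j := by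
      have : (fun z => norm2 (u z)) = fun z : Fin n → ℝ => norm2 z := by
        funext z; exact norm2_u_eq Q hQ1 u hu z
      rw [this]; exact gradx_norm2 x
    have h2x : (fun j => 2 * x j) = (2:ℝ) • x := by funext j; simp
    have hanti : ∀ ℓ, ((Pᵀ * G ℓ) *ᵥ x) ⬝ᵥ x = 0 := by
      intro ℓ
      have hA := antisym_Q Q hQreg hQ1 y0 ℓ
      have hAt : (Pᵀ * G ℓ)ᵀ = -(Pᵀ * G ℓ) := by
        have := hA
        rw [add_eq_zero_iff_eq_neg] at this
        rw [← neg_neg ((Pᵀ * G ℓ)ᵀ), ← this]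
      have hcc : ((Pᵀ * G ℓ) *ᵥ x) ⬝ᵥ x = -(((Pᵀ * G ℓ) *ᵥ x) ⬝ᵥ x) := by
        calc ((Pᵀ * G ℓ) *ᵥ x) ⬝ᵥ x = x ⬝ᵥ ((Pᵀ * G ℓ) *ᵥ x) := dotProduct_comm _ _
          _ = ((Pᵀ * G ℓ)ᵀ *ᵥ x) ⬝ᵥ x := by
              rw [Matrix.dotProduct_mulVec, ← Matrix.mulVec_transpose]
          _ = -(((Pᵀ * G ℓ) *ᵥ x) ⬝ᵥ x) := by
              rw [hAt, Matrix.neg_mulVec, neg_dotProduct]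
      linarith
    rw [hn2, h2x, hgy, Matrix.mulVec_smul, hXeq]
    rw [Matrix.add_mulVec, _root_.sum_mulVec, _root_.sum_mulVec]
    have e1 : ∀ ℓ, (vecMulVec ((Pᵀ * G ℓ) *ᵥ x) (g ℓ)
        + vecMulVec (g ℓ) ((Pᵀ * G ℓ) *ᵥ x)) *ᵥ x
        = (g ℓ ⬝ᵥ x) • ((Pᵀ * G ℓ) *ᵥ x) := by
      intro ℓ
      rw [Matrix.add_mulVec, _root_.vecMulVec_mulVec, _root_.vecMulVec_mulVec, hanti ℓ]
      simp
    have e2 : ∀ ℓ, (∑ k, ((a ℓ) ⬝ᵥ (a k)) • vecMulVec (g ℓ) (g k)) *ᵥ x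
        = ∑ k, (((a ℓ) ⬝ᵥ (a k)) * (g k ⬝ᵥ x)) • g ℓ := by
      intro ℓ
      rw [_root_.sum_mulVec]
      refine Finset.sum_congr rfl fun k _ => ?_
      rw [Matrix.smul_mulVec, _root_.vecMulVec_mulVec, smul_smul]
    rw [Finset.sum_congr rfl fun ℓ _ => e1 ℓ, Finset.sum_congr rfl fun ℓ _ => e2 ℓ]
end

section
/- Assume u(x) = Q(y(x)) x where Q is an SO(n)-valued matrix field of class C² depending only on the 2-plane radial variables y = (y_1,…,y_N). Then u is twice differentiable and: (i) Δu = Σ_{ℓ=1}^N [∂²_ℓQ x + Δy_ℓ ∂_ℓQ x + 2∂_ℓQ ∇y_ℓ]; (ii) [∇u]ᵗΔu = Σ_{ℓ=1}^N [Qᵗ∂²_ℓQ x + Δy_ℓ Qᵗ∂_ℓQ x + 2Qᵗ∂_ℓQ ∇y_ℓ] + Σ_{ℓ=1}^N Σ_{k=1}^N [⟨∂_ℓQ x, ∂²_kQ x⟩ + Δy_k ⟨∂_ℓQ x, ∂_kQ x⟩ + 2⟨∂_ℓQ x, ∂_kQ ∇y_k⟩] ∇y_ℓ; (iii) ∇(|∇u|²)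 = 2 Σ_{ℓ=1}^N [∂_ℓQᵗ Q ∇y_ℓ + ∇²y_ℓ Qᵗ∂_ℓQ x + ∂_ℓQᵗ∂_ℓQ x] + Σ_{ℓ=1}^N Σ_{k=1}^N 2[⟨(∂_kQᵗ∂_ℓQ + Qᵗ∂²_{ℓk}Q)x, ∇y_ℓ⟩ + ⟨∂²_{ℓk}Q x, ∂_ℓQ x⟩] ∇y_k. -/
open scoped BigOperators
open Matrix

namespace Stmt5Aux

open Filter

/-! ### Basic `pdx` calculus -/

lemma pdx_congr {m : ℕ} {f g : (Fin m → ℝ) → ℝ} {x : Fin m → ℝ}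
    (h : ∀ᶠ z in nhds x, f z = g z) (j : Fin m) : pdx f x j = pdx g x j := by
  unfold pdx
  rw [Filter.EventuallyEq.fderiv_eq h]

lemma pdx_add {m : ℕ} {f g : (Fin m → ℝ) → ℝ} {x : Fin m → ℝ}
    (hf : DifferentiableAt ℝ f x) (hg : DifferentiableAt ℝ g x) (j : Fin m) :
    pdx (fun z => f z + g z) x j = pdx f x j + pdx g x j := by
  unfold pdx
  rw [fderiv_fun_add hf hg, ContinuousLinearMap.add_apply]

lemma pdx_mul {m : ℕ} {f g : (Fin m → ℝ) → ℝ} {x : Fin m → ℝ}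
    (hf : DifferentiableAt ℝ f x) (hg : DifferentiableAt ℝ g x) (j : Fin m) :
    pdx (fun z => f z * g z) x j = pdx f x j * g x + f x * pdx g x j := by
  unfold pdx
  rw [fderiv_fun_mul hf hg]
  simp only [ContinuousLinearMap.add_apply, ContinuousLinearMap.smul_apply, smul_eq_mul]
  ring

lemma pdx_sum {m : ℕ} {ι : Type*} (s : Finset ι) {f : ι → (Fin m → ℝ) → ℝ} {x : Fin m → ℝ}
    (hf : ∀ i ∈ s, DifferentiableAt ℝ (f i) x) (j : Fin m) :
    pdx (fun z => ∑ i ∈ s, f i z) x j = ∑ i ∈ s, pdx (f i) x j := by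
  unfold pdx
  rw [fderiv_fun_sum hf, ContinuousLinearMap.sum_apply]

lemma pdx_const {m : ℕ} (c : ℝ) (x : Fin m → ℝ) (j : Fin m) :
    pdx (fun _ => c) x j = 0 := by
  unfold pdx
  rw [fderiv_fun_const]
  simp

lemma pdx_const_mul {m : ℕ} {f : (Fin m → ℝ) → ℝ} {x : Fin m → ℝ} (c : ℝ)
    (hf : DifferentiableAt ℝ f x) (j : Fin m) :
    pdx (fun z => c * f z) x j = c * pdx f x j := by
  unfold pdx
  rw [fderiv_const_mul hf]
  simp

lemma diff_coord {m : ℕ} (k : Fin m) (x : Fin m → ℝ) :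
    DifferentiableAt ℝ (fun z : Fin m → ℝ => z k) x :=
  (ContinuousLinearMap.proj k : (Fin m → ℝ) →L[ℝ] ℝ).differentiableAt

lemma pdx_coord {m : ℕ} (k : Fin m) (x : Fin m → ℝ) (j : Fin m) :
    pdx (fun z => z k) x j = if k = j then 1 else 0 := by
  unfold pdx
  have h : fderiv ℝ (fun z : Fin m → ℝ => z k) x
      = (ContinuousLinearMap.proj k : (Fin m → ℝ) →L[ℝ] ℝ) :=
    (ContinuousLinearMap.proj k : (Fin m → ℝ) →L[ℝ] ℝ).hasFDerivAt.fderiv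
  rw [h]
  simp [ContinuousLinearMap.proj_apply, Pi.single_apply]

lemma pdx_comp {m N : ℕ} {g : (Fin N → ℝ) → ℝ} {Y : (Fin m → ℝ) → (Fin N → ℝ)}
    {x : Fin m → ℝ} (hg : DifferentiableAt ℝ g (Y x))
    (hY : ∀ ℓ, DifferentiableAt ℝ (fun z => Y z ℓ) x) (j : Fin m) :
    pdx (fun z => g (Y z)) x j = ∑ ℓ, pdx g (Y x) ℓ * pdx (fun z => Y z ℓ) x j := by
  have hYd : DifferentiableAt ℝ Y x := by
    rw [show Y = fun z ℓ => Y z ℓ from rfl, differentiableAt_pi]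
    exact hY
  unfold pdx
  rw [show (fun z => g (Y z)) = g ∘ Y from rfl, fderiv_comp x hg hYd,
    ContinuousLinearMap.comp_apply]
  have hv : fderiv ℝ Y x (Pi.single j 1)
      = ∑ ℓ, (fderiv ℝ (fun z => Y z ℓ) x (Pi.single j 1)) • (Pi.single ℓ (1:ℝ) : Fin N → ℝ) := by
    funext k
    rw [Finset.sum_apply]
    have h2 : ∀ ℓ, ((fderiv ℝ (fun z => Y z ℓ) x (Pi.single j 1)) • (Pi.single ℓ (1:ℝ) : Fin N → ℝ)) k
        = if k = ℓ then (fderiv ℝ (fun z => Y z ℓ) x (Pi.single j 1)) else 0 := by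
      intro ℓ; simp [Pi.single_apply]
    rw [Finset.sum_congr rfl fun ℓ _ => h2 ℓ, Finset.sum_ite_eq]
    simp only [Finset.mem_univ, if_true]
    rw [show Y = fun z ℓ => Y z ℓ from rfl, fderiv_pi hY]
    rfl
  rw [hv, map_sum]
  refine Finset.sum_congr rfl fun ℓ _ => ?_
  rw [ContinuousLinearMap.map_smul, smul_eq_mul, mul_comm]

end Stmt5Aux
namespace Stmt5Aux

/-! ### `yvar` lemmas -/

/-- Explicit gradient of `yvar`. -/
noncomputable def gY (n : ℕ) (z : Fin n → ℝ) (ℓ : Fin ((n+1)/2)) (j : Fin n) : ℝ :=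
  if 2*(ℓ:ℕ)+1 < n then (if (j:ℕ)/2 = (ℓ:ℕ) then z j / yvar z ℓ else 0)
  else (if (j:ℕ) = n-1 then 1 else 0)

lemma yvar_even {n : ℕ} {ℓ : Fin ((n+1)/2)} (h : 2*(ℓ:ℕ)+1 < n) (z : Fin n → ℝ) :
    yvar z ℓ = Real.sqrt (z ⟨2*(ℓ:ℕ), by omega⟩ ^2 + z ⟨2*(ℓ:ℕ)+1, h⟩ ^2) := by
  unfold yvar; rw [dif_pos h]

lemma yvar_odd {n : ℕ} {ℓ : Fin ((n+1)/2)} (h : ¬ 2*(ℓ:ℕ)+1 < n) (z : Fin n → ℝ) :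
    yvar z ℓ = z ⟨n-1, by have := ℓ.isLt; omega⟩ := by
  unfold yvar; rw [dif_neg h]

lemma yvar_continuous {n : ℕ} (ℓ : Fin ((n+1)/2)) :
    Continuous (fun z : Fin n → ℝ => yvar z ℓ) := by
  by_cases h : 2*(ℓ:ℕ)+1 < n
  · rw [funext (yvar_even h)]
    exact Real.continuous_sqrt.comp (((continuous_apply _).pow 2).add ((continuous_apply _).pow 2))
  · rw [funext (yvar_odd h)]
    exact continuous_apply _

lemma yvar_sq_pos {n : ℕ} {ℓ : Fin ((n+1)/2)} (h : 2*(ℓ:ℕ)+1 < n) {z : Fin n → ℝ}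
    (hz : 0 < yvar z ℓ) :
    0 < z ⟨2*(ℓ:ℕ), by omega⟩ ^2 + z ⟨2*(ℓ:ℕ)+1, h⟩ ^2 := by
  rw [yvar_even h] at hz
  exact Real.sqrt_pos.mp hz

lemma yvar_contDiffAt {n : ℕ} {ℓ : Fin ((n+1)/2)} (z : Fin n → ℝ)
    (hz : 2*(ℓ:ℕ)+1 < n → 0 < yvar z ℓ) :
    ContDiffAt ℝ ⊤ (fun w => yvar w ℓ) z := by
  by_cases h : 2*(ℓ:ℕ)+1 < n
  · rw [funext (yvar_even h)]
    have hg : ContDiffAt ℝ ⊤ (fun w : Fin n → ℝ =>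
        w ⟨2*(ℓ:ℕ), by omega⟩ ^2 + w ⟨2*(ℓ:ℕ)+1, h⟩ ^2) z := by
      have h1 : ContDiff ℝ ⊤ (fun w : Fin n → ℝ => w ⟨2*(ℓ:ℕ), by omega⟩) :=
        (ContinuousLinearMap.proj _ : (Fin n → ℝ) →L[ℝ] ℝ).contDiff
      have h2 : ContDiff ℝ ⊤ (fun w : Fin n → ℝ => w ⟨2*(ℓ:ℕ)+1, h⟩) :=
        (ContinuousLinearMap.proj _ : (Fin n → ℝ) →L[ℝ] ℝ).contDiff
      exact (((h1.pow 2).add (h2.pow 2)).contDiffAt)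
    exact (Real.contDiffAt_sqrt (ne_of_gt (yvar_sq_pos h (hz h)))).comp z hg
  · rw [funext (yvar_odd h)]
    exact (ContinuousLinearMap.proj _ : (Fin n → ℝ) →L[ℝ] ℝ).contDiff.contDiffAt

lemma yvar_differentiableAt {n : ℕ} {ℓ : Fin ((n+1)/2)} (z : Fin n → ℝ)
    (hz : 2*(ℓ:ℕ)+1 < n → 0 < yvar z ℓ) :
    DifferentiableAt ℝ (fun w => yvar w ℓ) z :=
  (yvar_contDiffAt z hz).differentiableAt (by simp)

lemma pdx_yvar {n : ℕ} {ℓ : Fin ((n+1)/2)} (z : Fin n → ℝ)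
    (hz : 2*(ℓ:ℕ)+1 < n → 0 < yvar z ℓ) (j : Fin n) :
    pdx (fun w => yvar w ℓ) z j = gY n z ℓ j := by
  by_cases h : 2*(ℓ:ℕ)+1 < n
  · have ha : 2*(ℓ:ℕ) < n := by omega
    set a : Fin n := ⟨2*(ℓ:ℕ), ha⟩ with hadef
    set b : Fin n := ⟨2*(ℓ:ℕ)+1, h⟩ with hbdef
    have hfun : (fun w : Fin n → ℝ => yvar w ℓ)
        = fun w => Real.sqrt (w a ^2 + w b ^2) := funext (yvar_even h)
    have hpos : 0 < z a ^2 + z b ^2 := yvar_sq_pos h (hz h)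
    have hgd : DifferentiableAt ℝ (fun w : Fin n → ℝ => w a ^2 + w b ^2) z :=
      (((diff_coord a z).pow 2).add ((diff_coord b z).pow 2))
    have hsq : Real.sqrt (z a ^2 + z b ^2) = yvar z ℓ := (yvar_even h z).symm
    rw [hfun]
    unfold pdx
    rw [fderiv_sqrt hgd (ne_of_gt hpos)]
    have hg2 : (fun w : Fin n → ℝ => w a ^2 + w b ^2)
        = fun w => w a * w a + w b * w b := by funext w; ring
    have hpdg : fderiv ℝ (fun w : Fin n → ℝ => w a ^2 + w b ^2) z (Pi.single j 1)
        = 2 * z a * (if a = j then 1 else 0) + 2 * z b * (if b = j then 1 else 0) := by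
      have h1 := pdx_add (m := n) ((diff_coord a z).fun_mul (diff_coord a z))
        ((diff_coord b z).fun_mul (diff_coord b z)) j
      have h2 := pdx_mul (diff_coord a z) (diff_coord a z) j
      have h3 := pdx_mul (diff_coord b z) (diff_coord b z) j
      rw [hg2]
      show pdx (fun w : Fin n → ℝ => w a * w a + w b * w b) z j = _
      rw [h1, h2, h3, pdx_coord, pdx_coord]
      ring
    rw [ContinuousLinearMap.smul_apply, hpdg, smul_eq_mul, hsq]
    unfold gY
    rw [if_pos h]
    by_cases hja : j = a
    · subst hja
      have h1 : a = a := rfl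
      have h2 : ¬ (b = a) := by simp [hadef, hbdef, Fin.ext_iff]
      have h3 : (a:ℕ)/2 = (ℓ:ℕ) := by first | (simp [hadef]; omega) | (simp [hadef])
      rw [if_pos h1, if_neg h2, if_pos h3]
      have hy : yvar z ℓ ≠ 0 := ne_of_gt (hz h)
      field_simp
      ring
    · by_cases hjb : j = b
      · subst hjb
        have h2 : ¬ (a = b) := by simp [hadef, hbdef, Fin.ext_iff]
        have h3 : (b:ℕ)/2 = (ℓ:ℕ) := by first | (simp [hbdef]; omega) | (simp [hbdef])
        rw [if_neg h2, if_pos rfl, if_pos h3]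
        have hy : yvar z ℓ ≠ 0 := ne_of_gt (hz h)
        field_simp
        ring
      · have h1 : ¬ (a = j) := fun hc => hja hc.symm
        have h2 : ¬ (b = j) := fun hc => hjb hc.symm
        have h3 : ¬ ((j:ℕ)/2 = (ℓ:ℕ)) := by
          intro hc
          have hja' : (j:ℕ) ≠ 2*(ℓ:ℕ) := fun hc2 => hja (by simp [hadef, Fin.ext_iff, hc2])
          have hjb' : (j:ℕ) ≠ 2*(ℓ:ℕ)+1 := fun hc2 => hjb (by simp [hbdef, Fin.ext_iff, hc2])
          omega
        rw [if_neg h1, if_neg h2, if_neg h3]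
        ring
  · rw [funext (yvar_odd h)]
    rw [pdx_coord]
    unfold gY
    rw [if_neg h]
    by_cases hj : (⟨n-1, by have := ℓ.isLt; omega⟩ : Fin n) = j
    · rw [if_pos hj, if_pos]
      rw [← hj]
    · rw [if_neg hj, if_neg]
      intro hc
      exact hj (by rw [Fin.ext_iff]; simp [hc])

lemma gY_orth {n : ℕ} (z : Fin n → ℝ)
    (hz : ∀ ℓ : Fin ((n+1)/2), 2*(ℓ:ℕ)+1 < n → 0 < yvar z ℓ) (ℓ k : Fin ((n+1)/2)) :
    ∑ j, gY n z ℓ j * gY n z k j = if ℓ = k then 1 else 0 := by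
  by_cases hℓ : 2*(ℓ:ℕ)+1 < n
  · by_cases hk : 2*(k:ℕ)+1 < n
    · by_cases hlk : ℓ = k
      · subst hlk
        rw [if_pos rfl]
        set a : Fin n := ⟨2*(ℓ:ℕ), by omega⟩ with hadef
        set b : Fin n := ⟨2*(ℓ:ℕ)+1, hℓ⟩ with hbdef
        have hterm : ∀ j : Fin n, gY n z ℓ j * gY n z ℓ j
            = (if j = a then z a^2/(yvar z ℓ)^2 else 0)
              + (if j = b then z b^2/(yvar z ℓ)^2 else 0) := by
          intro j
          unfold gY
          rw [if_pos hℓ]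
          by_cases hja : j = a
          · subst hja
            have h3 : (a:ℕ)/2 = (ℓ:ℕ) := by first | (simp [hadef]; omega) | (simp [hadef])
            have h4 : ¬ (a = b) := by simp [hadef, hbdef, Fin.ext_iff]
            rw [if_pos h3, if_pos rfl, if_neg h4]
            ring
          · by_cases hjb : j = b
            · subst hjb
              have h3 : (b:ℕ)/2 = (ℓ:ℕ) := by first | (simp [hbdef]; omega) | (simp [hbdef])
              have h4 : ¬ (b = a) := by simp [hadef, hbdef, Fin.ext_iff]
              rw [if_pos h3, if_neg h4, if_pos rfl]
              ring
            · have h3 : ¬ ((j:ℕ)/2 = (ℓ:ℕ)) := by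
                intro hc
                have hja' : (j:ℕ) ≠ 2*(ℓ:ℕ) := fun hc2 => hja (by simp [hadef, Fin.ext_iff, hc2])
                have hjb' : (j:ℕ) ≠ 2*(ℓ:ℕ)+1 := fun hc2 => hjb (by simp [hbdef, Fin.ext_iff, hc2])
                omega
              rw [if_neg h3, if_neg hja, if_neg hjb]
              ring
        rw [Finset.sum_congr rfl fun j _ => hterm j, Finset.sum_add_distrib,
          Finset.sum_ite_eq', Finset.sum_ite_eq']
        simp only [Finset.mem_univ, if_true]
        have hy2 : (yvar z ℓ)^2 = z a^2 + z b^2 := by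
          rw [yvar_even hℓ z, Real.sq_sqrt (le_of_lt (yvar_sq_pos hℓ (hz ℓ hℓ)))]
        have hyne : (yvar z ℓ)^2 ≠ 0 := by
          have := hz ℓ hℓ; positivity
        rw [hy2] at hyne ⊢
        field_simp
      · rw [if_neg hlk]
        refine Finset.sum_eq_zero fun j _ => ?_
        unfold gY
        rw [if_pos hℓ, if_pos hk]
        by_cases h1 : (j:ℕ)/2 = (ℓ:ℕ)
        · by_cases h2 : (j:ℕ)/2 = (k:ℕ)
          · exact absurd (Fin.ext (h1 ▸ h2 : (ℓ:ℕ) = (k:ℕ))) hlk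
          · rw [if_neg h2]; ring
        · rw [if_neg h1]; ring
    · -- ℓ even-type, k odd-type : ℓ ≠ k and all terms vanish
      have hlk : ℓ ≠ k := by
        intro hc; subst hc; exact hk hℓ
      rw [if_neg hlk]
      refine Finset.sum_eq_zero fun j _ => ?_
      unfold gY
      rw [if_pos hℓ, if_neg hk]
      by_cases h1 : (j:ℕ)/2 = (ℓ:ℕ)
      · by_cases h2 : (j:ℕ) = n-1
        · have hkb := k.isLt
          have hjb := j.isLt
          omega
        · rw [if_neg h2]; ring
      · rw [if_neg h1]; ring
  · by_cases hk : 2*(k:ℕ)+1 < n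
    · have hlk : ℓ ≠ k := by
        intro hc; subst hc; exact hℓ hk
      rw [if_neg hlk]
      refine Finset.sum_eq_zero fun j _ => ?_
      unfold gY
      rw [if_neg hℓ, if_pos hk]
      by_cases h2 : (j:ℕ)/2 = (k:ℕ)
      · by_cases h1 : (j:ℕ) = n-1
        · have hlb := ℓ.isLt
          have hjb := j.isLt
          omega
        · rw [if_neg h1]; ring
      · rw [if_neg h2]; ring
    · have hlk : ℓ = k := by
        have h1 := ℓ.isLt
        have h2 := k.isLt
        exact Fin.ext (by omega)
      subst hlk
      rw [if_pos rfl]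
      have hn1 : n - 1 < n := by have := ℓ.isLt; omega
      have hterm : ∀ j : Fin n, gY n z ℓ j * gY n z ℓ j
          = if j = (⟨n-1, hn1⟩ : Fin n) then 1 else 0 := by
        intro j
        unfold gY
        rw [if_neg hℓ]
        by_cases h1 : (j:ℕ) = n-1
        · rw [if_pos h1, if_pos (Fin.ext h1)]
          ring
        · rw [if_neg h1, if_neg (fun hc => h1 (by rw [hc]))]
          ring
      rw [Finset.sum_congr rfl fun j _ => hterm j, Finset.sum_ite_eq']
      simp

end Stmt5Aux
namespace Stmt5Aux

open Filter

/-! ### Composite machinery -/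

/-- The positivity region. -/
def Pos (n : ℕ) (z : Fin n → ℝ) : Prop :=
  ∀ ℓ : Fin ((n+1)/2), 2*(ℓ:ℕ)+1 < n → 0 < yvar z ℓ

lemma eventually_pos {n : ℕ} {x : Fin n → ℝ} (hx : Pos n x) : ∀ᶠ z in nhds x, Pos n z := by
  unfold Pos
  rw [Filter.eventually_all]
  intro ℓ
  by_cases h : 2*(ℓ:ℕ)+1 < n
  · have hc : ContinuousAt (fun z : Fin n → ℝ => yvar z ℓ) x := (yvar_continuous ℓ).continuousAt
    have h2 : ∀ᶠ z in nhds x, 0 < yvar z ℓ := hc.eventually (eventually_gt_nhds (hx ℓ h))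
    exact h2.mono fun z hz _ => hz
  · exact Filter.Eventually.of_forall fun z h' => absurd h' h

variable {n : ℕ} (Q : (Fin ((n+1)/2) → ℝ) → Matrix (Fin n) (Fin n) ℝ)

/-- The first-derivative coefficient functions. -/
noncomputable def Af (ℓ : Fin ((n+1)/2)) (i : Fin n) : (Fin n → ℝ) → ℝ :=
  fun z => ∑ m, pdM Q (yv z) ℓ i m * z m

/-- The gradient entry functions of `yvar`. -/
noncomputable def Gf (n : ℕ) (ℓ : Fin ((n+1)/2)) (j : Fin n) : (Fin n → ℝ) → ℝ :=
  fun z => pdx (fun w => yvar w ℓ) z j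

/-- The first-derivative functions of `u`. -/
noncomputable def vf (i j : Fin n) : (Fin n → ℝ) → ℝ :=
  fun z => Q (yv z) i j + ∑ ℓ, Af Q ℓ i z * Gf n ℓ j z

lemma pdQ_contDiff (hQreg : ∀ i j, ContDiff ℝ 2 fun y => Q y i j) (ℓ : Fin ((n+1)/2))
    (i m : Fin n) : ContDiff ℝ 1 (fun w => pdM Q w ℓ i m) := by
  have h1 : ContDiff ℝ 1 (fderiv ℝ (fun w => Q w i m)) :=
    (hQreg i m).fderiv_right (by norm_num)
  exact (ContinuousLinearMap.apply ℝ ℝ (Pi.single ℓ (1:ℝ))).contDiff.comp h1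

lemma Gf_diff {x : Fin n → ℝ} (hx : Pos n x) (ℓ : Fin ((n+1)/2)) (j : Fin n) :
    DifferentiableAt ℝ (Gf n ℓ j) x := by
  have h1 : ContDiffAt ℝ 1 (fderiv ℝ (fun w => yvar w ℓ)) x :=
    (yvar_contDiffAt x (hx ℓ)).fderiv_right le_top
  have h2 := ((ContinuousLinearMap.apply ℝ ℝ (Pi.single j (1:ℝ))).contDiff.contDiffAt).comp x h1
  exact h2.differentiableAt one_ne_zero

lemma yv_diff {x : Fin n → ℝ} (hx : Pos n x) : DifferentiableAt ℝ (yv (n := n)) x := by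
  rw [show yv (n := n) = fun z ℓ => yvar z ℓ from rfl, differentiableAt_pi]
  exact fun ℓ => yvar_differentiableAt x (hx ℓ)

lemma Qcomp_diff (hQreg : ∀ i j, ContDiff ℝ 2 fun y => Q y i j) {x : Fin n → ℝ}
    (hx : Pos n x) (i m : Fin n) : DifferentiableAt ℝ (fun z => Q (yv z) i m) x :=
  DifferentiableAt.comp x (((hQreg i m).differentiable (by norm_num)).differentiableAt)
    (yv_diff hx)

lemma pdx_Qcomp (hQreg : ∀ i j, ContDiff ℝ 2 fun y => Q y i j) {x : Fin n → ℝ}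
    (hx : Pos n x) (i m : Fin n) (j : Fin n) :
    pdx (fun z => Q (yv z) i m) x j
      = ∑ ℓ, pdM Q (yv x) ℓ i m * Gf n ℓ j x := by
  have h := pdx_comp (g := fun w => Q w i m) (Y := yv)
    (((hQreg i m).differentiable (by norm_num)).differentiableAt)
    (fun ℓ => yvar_differentiableAt x (hx ℓ)) j
  exact h

lemma pdQcomp_diff (hQreg : ∀ i j, ContDiff ℝ 2 fun y => Q y i j) {x : Fin n → ℝ}
    (hx : Pos n x) (ℓ : Fin ((n+1)/2)) (i m : Fin n) :
    DifferentiableAt ℝ (fun z => pdM Q (yv z) ℓ i m) x :=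
  DifferentiableAt.comp x
    (((pdQ_contDiff Q hQreg ℓ i m).differentiable one_ne_zero).differentiableAt)
    (yv_diff hx)

lemma pdx_pdQcomp (hQreg : ∀ i j, ContDiff ℝ 2 fun y => Q y i j) {x : Fin n → ℝ}
    (hx : Pos n x) (ℓ : Fin ((n+1)/2)) (i m : Fin n) (j : Fin n) :
    pdx (fun z => pdM Q (yv z) ℓ i m) x j
      = ∑ p, pdM2 Q (yv x) ℓ p i m * Gf n p j x := by
  have h := pdx_comp (g := fun w => pdM Q w ℓ i m) (Y := yv)
    (((pdQ_contDiff Q hQreg ℓ i m).differentiable one_ne_zero).differentiableAt)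
    (fun p => yvar_differentiableAt x (hx p)) j
  exact h

lemma Af_diff (hQreg : ∀ i j, ContDiff ℝ 2 fun y => Q y i j) {x : Fin n → ℝ}
    (hx : Pos n x) (ℓ : Fin ((n+1)/2)) (i : Fin n) :
    DifferentiableAt ℝ (Af Q ℓ i) x :=
  DifferentiableAt.fun_sum fun m _ => (pdQcomp_diff Q hQreg hx ℓ i m).fun_mul (diff_coord m x)

lemma Af_apply (ℓ : Fin ((n+1)/2)) (i : Fin n) (z : Fin n → ℝ) :
    Af Q ℓ i z = (pdM Q (yv z) ℓ *ᵥ z) i := by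
  simp [Af, Matrix.mulVec, dotProduct]

lemma pdx_Af (hQreg : ∀ i j, ContDiff ℝ 2 fun y => Q y i j) {x : Fin n → ℝ}
    (hx : Pos n x) (ℓ : Fin ((n+1)/2)) (i : Fin n) (j : Fin n) :
    pdx (Af Q ℓ i) x j
      = ∑ m, (∑ p, pdM2 Q (yv x) ℓ p i m * Gf n p j x) * x m + pdM Q (yv x) ℓ i j := by
  unfold Af
  rw [pdx_sum Finset.univ (fun m _ => (pdQcomp_diff Q hQreg hx ℓ i m).fun_mul (diff_coord m x)) j]
  have hterm : ∀ m, pdx (fun z => pdM Q (yv z) ℓ i m * z m) x j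
      = (∑ p, pdM2 Q (yv x) ℓ p i m * Gf n p j x) * x m
        + pdM Q (yv x) ℓ i m * (if m = j then 1 else 0) := by
    intro m
    rw [pdx_mul (pdQcomp_diff Q hQreg hx ℓ i m) (diff_coord m x) j,
      pdx_pdQcomp Q hQreg hx ℓ i m j, pdx_coord]
  rw [Finset.sum_congr rfl fun m _ => hterm m, Finset.sum_add_distrib]
  congr 1
  rw [Finset.sum_congr rfl (fun m _ => by rw [mul_ite, mul_one, mul_zero]),
    Finset.sum_ite_eq']
  simp

lemma v_eq (hQreg : ∀ i j, ContDiff ℝ 2 fun y => Q y i j)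
    (u : (Fin n → ℝ) → Fin n → ℝ) (hu : ∀ z, u z = Q (yv z) *ᵥ z)
    {z : Fin n → ℝ} (hz : Pos n z) (i j : Fin n) :
    pdx (fun w => u w i) z j = vf Q i j z := by
  have hfun : (fun w => u w i) = fun w => ∑ m, Q (yv w) i m * w m := by
    funext w; rw [hu w]; simp [Matrix.mulVec, dotProduct]
  rw [hfun,
    pdx_sum Finset.univ (fun m _ => (Qcomp_diff Q hQreg hz i m).fun_mul (diff_coord m z)) j]
  have hterm : ∀ m, pdx (fun w => Q (yv w) i m * w m) z j
      = (∑ ℓ, pdM Q (yv z) ℓ i m * Gf n ℓ j z) * z m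
        + Q (yv z) i m * (if m = j then 1 else 0) := by
    intro m
    rw [pdx_mul (Qcomp_diff Q hQreg hz i m) (diff_coord m z) j,
      pdx_Qcomp Q hQreg hz i m j, pdx_coord]
  rw [Finset.sum_congr rfl fun m _ => hterm m, Finset.sum_add_distrib]
  unfold vf
  have hA : ∑ m, (∑ ℓ, pdM Q (yv z) ℓ i m * Gf n ℓ j z) * z m
      = ∑ ℓ, Af Q ℓ i z * Gf n ℓ j z := by
    calc ∑ m, (∑ ℓ, pdM Q (yv z) ℓ i m * Gf n ℓ j z) * z m
        = ∑ m, ∑ ℓ, pdM Q (yv z) ℓ i m * z m * Gf n ℓ j z := by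
          refine Finset.sum_congr rfl fun m _ => ?_
          rw [Finset.sum_mul]
          exact Finset.sum_congr rfl fun ℓ _ => by ring
      _ = ∑ ℓ, ∑ m, pdM Q (yv z) ℓ i m * z m * Gf n ℓ j z := Finset.sum_comm
      _ = ∑ ℓ, Af Q ℓ i z * Gf n ℓ j z := by
          refine Finset.sum_congr rfl fun ℓ _ => ?_
          rw [show Af Q ℓ i z = ∑ m, pdM Q (yv z) ℓ i m * z m from rfl, Finset.sum_mul]
  have hB : ∑ m, Q (yv z) i m * (if m = j then 1 else 0) = Q (yv z) i j := by
    rw [Finset.sum_congr rfl (fun m _ => by rw [mul_ite, mul_one, mul_zero]),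
      Finset.sum_ite_eq']
    simp
  rw [hA, hB, add_comm]

lemma vf_diff (hQreg : ∀ i j, ContDiff ℝ 2 fun y => Q y i j) {x : Fin n → ℝ}
    (hx : Pos n x) (i j : Fin n) : DifferentiableAt ℝ (vf Q i j) x :=
  (Qcomp_diff Q hQreg hx i j).add
    (DifferentiableAt.fun_sum fun ℓ _ => (Af_diff Q hQreg hx ℓ i).fun_mul (Gf_diff hx ℓ j))

lemma pdx_vf (hQreg : ∀ i j, ContDiff ℝ 2 fun y => Q y i j) {x : Fin n → ℝ}
    (hx : Pos n x) (i j k : Fin n) :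
    pdx (vf Q i j) x k
      = ∑ p, pdM Q (yv x) p i j * Gf n p k x
        + ∑ ℓ, ((∑ m, (∑ p, pdM2 Q (yv x) ℓ p i m * Gf n p k x) * x m
              + pdM Q (yv x) ℓ i k) * Gf n ℓ j x
            + Af Q ℓ i x * hessx (fun w => yvar w ℓ) x k j) := by
  unfold vf
  rw [pdx_add (Qcomp_diff Q hQreg hx i j)
      (DifferentiableAt.fun_sum fun ℓ _ => (Af_diff Q hQreg hx ℓ i).fun_mul (Gf_diff hx ℓ j)) k,
    pdx_Qcomp Q hQreg hx i j k,
    pdx_sum Finset.univ (fun ℓ _ => (Af_diff Q hQreg hx ℓ i).fun_mul (Gf_diff hx ℓ j)) k]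
  congr 1
  refine Finset.sum_congr rfl fun ℓ _ => ?_
  rw [pdx_mul (Af_diff Q hQreg hx ℓ i) (Gf_diff hx ℓ j) k, pdx_Af Q hQreg hx ℓ i k]
  rfl

lemma gram_x {x : Fin n → ℝ} (hx : Pos n x) (ℓ k : Fin ((n+1)/2)) :
    ∑ j, Gf n ℓ j x * Gf n k j x = if ℓ = k then 1 else 0 := by
  rw [Finset.sum_congr rfl fun j _ => by
    rw [show Gf n ℓ j x = gY n x ℓ j from pdx_yvar x (hx ℓ) j,
      show Gf n k j x = gY n x k j from pdx_yvar x (hx k) j]]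
  exact gY_orth x hx ℓ k

lemma hess_gram {x : Fin n → ℝ} (hx : Pos n x) (ℓ k : Fin ((n+1)/2)) (r : Fin n) :
    ∑ j, (hessx (fun w => yvar w ℓ) x r j * Gf n k j x
      + Gf n ℓ j x * hessx (fun w => yvar w k) x r j) = 0 := by
  have hev : ∀ᶠ z in nhds x, (∑ j, Gf n ℓ j z * Gf n k j z)
      = (fun _ : Fin n → ℝ => (if ℓ = k then (1:ℝ) else 0)) z := by
    refine (eventually_pos hx).mono fun z hz => ?_
    rw [Finset.sum_congr rfl fun j _ => by
      rw [show Gf n ℓ j z = gY n z ℓ j from pdx_yvar z (hz ℓ) j,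
        show Gf n k j z = gY n z k j from pdx_yvar z (hz k) j]]
    exact gY_orth z hz ℓ k
  have h0 : pdx (fun z => ∑ j, Gf n ℓ j z * Gf n k j z) x r = 0 := by
    rw [pdx_congr hev, pdx_const]
  rw [pdx_sum Finset.univ (fun j _ => (Gf_diff hx ℓ j).fun_mul (Gf_diff hx k j)) r] at h0
  rw [← h0]
  refine Finset.sum_congr rfl fun j _ => ?_
  rw [pdx_mul (Gf_diff hx ℓ j) (Gf_diff hx k j) r]
  rfl

lemma Qtrace (hQreg : ∀ i j, ContDiff ℝ 2 fun y => Q y i j)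
    (hQSO : ∀ y, (Q y)ᵀ * Q y = 1 ∧ (Q y).det = 1)
    (y : Fin ((n+1)/2) → ℝ) (p : Fin ((n+1)/2)) :
    ∑ i, ∑ m, Q y i m * pdM Q y p i m = 0 := by
  have hd : ∀ i m, DifferentiableAt ℝ (fun w => Q w i m) y := fun i m =>
    ((hQreg i m).differentiable (by norm_num)).differentiableAt
  have hconst : (fun w => ∑ i, ∑ m, Q w i m * Q w i m) = fun _ => ((n:ℝ)) := by
    funext w
    have h1 := (hQSO w).1
    have h2 : ∀ m, (∑ i, Q w i m * Q w i m) = (1 : Matrix (Fin n) (Fin n) ℝ) m m := by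
      intro m
      rw [← h1]
      simp [Matrix.mul_apply, Matrix.transpose_apply]
    rw [Finset.sum_comm, Finset.sum_congr rfl fun m _ => h2 m]
    simp [Matrix.one_apply]
  have h0 : pdx (fun w => ∑ i, ∑ m, Q w i m * Q w i m) y p = 0 := by
    rw [hconst]
    exact pdx_const _ y p
  rw [pdx_sum Finset.univ
      (fun i _ => DifferentiableAt.fun_sum fun m _ => (hd i m).fun_mul (hd i m)) p] at h0
  have hstep : ∀ i, pdx (fun w => ∑ m, Q w i m * Q w i m) y p
      = ∑ m, 2 * (Q y i m * pdM Q y p i m) := by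
    intro i
    rw [pdx_sum Finset.univ (fun m _ => (hd i m).fun_mul (hd i m)) p]
    refine Finset.sum_congr rfl fun m _ => ?_
    rw [pdx_mul (hd i m) (hd i m) p]
    show pdM Q y p i m * Q y i m + Q y i m * pdM Q y p i m = _
    ring
  rw [Finset.sum_congr rfl fun i _ => hstep i] at h0
  simp only [← Finset.mul_sum] at h0
  linarith

end Stmt5Aux
namespace Stmt5Aux

open Matrix

/-! ### Matrix helpers -/

lemma vecMulVec_transpose_mulVec {n : ℕ} (a g v : Fin n → ℝ) :
    (Matrix.vecMulVec a g)ᵀ *ᵥ v = (a ⬝ᵥ v) • g := by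
  funext j
  show ∑ i, (Matrix.vecMulVec a g)ᵀ j i * v i = (∑ i, a i * v i) * g j
  calc ∑ i, (Matrix.vecMulVec a g)ᵀ j i * v i
      = ∑ i, (a i * v i) * g j := by
        refine Finset.sum_congr rfl fun i _ => ?_
        rw [Matrix.transpose_apply, Matrix.vecMulVec_apply]
        ring
    _ = (∑ i, a i * v i) * g j := by rw [Finset.sum_mul]

lemma sum_mulVec {n N : ℕ} (M : Fin N → Matrix (Fin n) (Fin n) ℝ) (w : Fin n → ℝ) :
    (∑ ℓ, M ℓ) *ᵥ w = ∑ ℓ, M ℓ *ᵥ w := by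
  funext j
  rw [Finset.sum_apply]
  show ∑ i, (∑ ℓ, M ℓ) j i * w i = ∑ ℓ, ∑ i, M ℓ j i * w i
  rw [Finset.sum_comm]
  refine Finset.sum_congr rfl fun i _ => ?_
  rw [Matrix.sum_apply, Finset.sum_mul]

lemma mulVec_sumVec {n N : ℕ} (A : Matrix (Fin n) (Fin n) ℝ) (v : Fin N → Fin n → ℝ) :
    A *ᵥ (∑ k, v k) = ∑ k, A *ᵥ v k := by
  funext j
  rw [Finset.sum_apply]
  show ∑ i, A j i * (∑ k, v k) i = ∑ k, ∑ i, A j i * v k i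
  rw [Finset.sum_comm]
  refine Finset.sum_congr rfl fun i _ => ?_
  rw [Finset.sum_apply, Finset.mul_sum]

lemma dotProduct_sumVec {n N : ℕ} (a : Fin n → ℝ) (v : Fin N → Fin n → ℝ) :
    a ⬝ᵥ (∑ k, v k) = ∑ k, a ⬝ᵥ v k := by
  show ∑ i, a i * (∑ k, v k) i = ∑ k, ∑ i, a i * v k i
  rw [Finset.sum_comm]
  refine Finset.sum_congr rfl fun i _ => ?_
  rw [Finset.sum_apply, Finset.mul_sum]

/-- The gradient matrix of `u`. -/
lemma gradm_eq {n : ℕ} (Q : (Fin ((n+1)/2) → ℝ) → Matrix (Fin n) (Fin n) ℝ)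
    (hQreg : ∀ i j, ContDiff ℝ 2 fun y => Q y i j)
    (u : (Fin n → ℝ) → Fin n → ℝ) (hu : ∀ z, u z = Q (yv z) *ᵥ z)
    {x : Fin n → ℝ} (hx : Pos n x) :
    gradm u x = Q (yv x)
      + ∑ ℓ, Matrix.vecMulVec (pdM Q (yv x) ℓ *ᵥ x) (fun j => Gf n ℓ j x) := by
  ext i j
  rw [show gradm u x i j = pdx (fun z => u z i) x j from rfl,
    v_eq Q hQreg u hu hx i j]
  unfold vf
  rw [Matrix.add_apply, Matrix.sum_apply]
  have hterm : ∀ ℓ : Fin ((n+1)/2),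
      Af Q ℓ i x * Gf n ℓ j x
        = Matrix.vecMulVec (pdM Q (yv x) ℓ *ᵥ x) (fun j' => Gf n ℓ j' x) i j := by
    intro ℓ
    rw [Matrix.vecMulVec_apply, Af_apply]
  rw [Finset.sum_congr rfl fun ℓ _ => hterm ℓ]

/-! ### Algebra for part (i) -/

lemma sum_algebra1 {n N : ℕ} (G : Fin N → Fin n → ℝ) (H : Fin N → Fin n → ℝ)
    (c : Fin N → Fin n → ℝ) (d : Fin N → Fin N → Fin n → ℝ) (A : Fin N → ℝ)
    (xv : Fin n → ℝ)
    (horth : ∀ p ℓ, ∑ j, G p j * G ℓ j = if p = ℓ then 1 else 0)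
    (hA : ∀ ℓ, A ℓ = ∑ m, c ℓ m * xv m) :
    ∑ j, ((∑ p, c p j * G p j)
      + ∑ ℓ, ((∑ m, (∑ p, d ℓ p m * G p j) * xv m + c ℓ j) * G ℓ j + A ℓ * H ℓ j))
    = ∑ ℓ, ((∑ m, d ℓ ℓ m * xv m) + (∑ j, H ℓ j) * A ℓ + 2 * (∑ j, c ℓ j * G ℓ j)) := by
  have hsplit : ∀ j : Fin n,
      ∑ ℓ, ((∑ m, (∑ p, d ℓ p m * G p j) * xv m + c ℓ j) * G ℓ j + A ℓ * H ℓ j)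
      = ∑ ℓ, (∑ m, (∑ p, d ℓ p m * G p j) * xv m) * G ℓ j
        + (∑ ℓ, c ℓ j * G ℓ j + ∑ ℓ, A ℓ * H ℓ j) := by
    intro j
    rw [← Finset.sum_add_distrib, ← Finset.sum_add_distrib]
    exact Finset.sum_congr rfl fun ℓ _ => by ring
  rw [Finset.sum_congr rfl fun j _ => by rw [hsplit j]]
  rw [Finset.sum_add_distrib, Finset.sum_add_distrib, Finset.sum_add_distrib]
  have e1 : ∑ j, ∑ p, c p j * G p j = ∑ ℓ, ∑ j, c ℓ j * G ℓ j := Finset.sum_comm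
  have e2 : ∑ j, ∑ ℓ, (∑ m, (∑ p, d ℓ p m * G p j) * xv m) * G ℓ j
      = ∑ ℓ, ∑ m, d ℓ ℓ m * xv m := by
    rw [Finset.sum_comm]
    refine Finset.sum_congr rfl fun ℓ _ => ?_
    calc ∑ j, (∑ m, (∑ p, d ℓ p m * G p j) * xv m) * G ℓ j
        = ∑ j, ∑ m, ∑ p, d ℓ p m * xv m * (G p j * G ℓ j) := by
          refine Finset.sum_congr rfl fun j _ => ?_
          rw [Finset.sum_mul]
          refine Finset.sum_congr rfl fun m _ => ?_
          rw [Finset.sum_mul, Finset.sum_mul]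
          refine Finset.sum_congr rfl fun p _ => ?_
          ring
      _ = ∑ m, ∑ p, d ℓ p m * xv m * (∑ j, G p j * G ℓ j) := by
          rw [Finset.sum_comm]
          refine Finset.sum_congr rfl fun m _ => ?_
          rw [Finset.sum_comm]
          refine Finset.sum_congr rfl fun p _ => ?_
          rw [Finset.mul_sum]
      _ = ∑ m, d ℓ ℓ m * xv m := by
          refine Finset.sum_congr rfl fun m _ => ?_
          rw [Finset.sum_congr rfl fun p _ => by rw [horth p ℓ]]
          rw [Finset.sum_congr rfl fun p (_ : p ∈ Finset.univ) =>
            (by rw [mul_ite, mul_one, mul_zero] :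
              d ℓ p m * xv m * (if p = ℓ then (1:ℝ) else 0)
                = if p = ℓ then d ℓ p m * xv m else 0)]
          rw [Finset.sum_ite_eq']
          simp
  have e4 : ∑ j, ∑ ℓ, A ℓ * H ℓ j = ∑ ℓ, (∑ j, H ℓ j) * A ℓ := by
    rw [Finset.sum_comm]
    refine Finset.sum_congr rfl fun ℓ _ => ?_
    rw [← Finset.mul_sum, mul_comm]
  rw [e1, e2, e4]
  rw [← Finset.sum_add_distrib, ← Finset.sum_add_distrib, ← Finset.sum_add_distrib]
  exact Finset.sum_congr rfl fun ℓ _ => by ring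

end Stmt5Aux
namespace Stmt5Aux

/-! ### Algebra for part (iii) -/

lemma collapse_delta {N : ℕ} (F D : Fin N → Fin N → ℝ)
    (hD : ∀ ℓ k, D ℓ k = if ℓ = k then 1 else 0) :
    ∑ ℓ, ∑ k, F ℓ k * D ℓ k = ∑ ℓ, F ℓ ℓ := by
  refine Finset.sum_congr rfl fun ℓ _ => ?_
  rw [Finset.sum_congr rfl fun k (_ : k ∈ Finset.univ) =>
    (by rw [hD ℓ k, mul_ite, mul_one, mul_zero] :
      F ℓ k * D ℓ k = if ℓ = k then F ℓ k else 0)]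
  rw [Finset.sum_ite_eq]
  simp

lemma collapse_antisym {N : ℕ} (F D : Fin N → Fin N → ℝ)
    (hF : ∀ ℓ k, F ℓ k = F k ℓ) (hD : ∀ ℓ k, D ℓ k + D k ℓ = 0) :
    ∑ ℓ, ∑ k, F ℓ k * D ℓ k = 0 := by
  have hX : ∑ ℓ, ∑ k, F ℓ k * D ℓ k = ∑ ℓ, ∑ k, F k ℓ * D k ℓ := Finset.sum_comm
  have h2 : (∑ ℓ, ∑ k, F ℓ k * D ℓ k) + (∑ ℓ, ∑ k, F k ℓ * D k ℓ) = 0 := by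
    rw [← Finset.sum_add_distrib]
    rw [Finset.sum_congr rfl fun ℓ (_ : ℓ ∈ Finset.univ) =>
      (Finset.sum_add_distrib.symm :
        (∑ k, F ℓ k * D ℓ k) + (∑ k, F k ℓ * D k ℓ)
          = ∑ k, (F ℓ k * D ℓ k + F k ℓ * D k ℓ))]
    rw [Finset.sum_congr rfl fun ℓ _ => Finset.sum_congr rfl fun k (_ : k ∈ Finset.univ) =>
      (by rw [← hF ℓ k, ← mul_add, hD ℓ k, mul_zero] :
        F ℓ k * D ℓ k + F k ℓ * D k ℓ = 0)]
    simp
  linarith [hX, h2]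

/-- `∑i∑j c i j * (∑ℓ B ℓ i * T ℓ j) = ∑ℓ∑j (∑i c i j * B ℓ i) * T ℓ j`. -/
lemma cD_piece {n N : ℕ} (c : Fin n → Fin n → ℝ) (B T : Fin N → Fin n → ℝ) :
    ∑ i, ∑ j, c i j * (∑ ℓ, B ℓ i * T ℓ j)
      = ∑ ℓ, ∑ j, (∑ i, c i j * B ℓ i) * T ℓ j := by
  calc ∑ i, ∑ j, c i j * (∑ ℓ, B ℓ i * T ℓ j)
      = ∑ i, ∑ j, ∑ ℓ, c i j * B ℓ i * T ℓ j := by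
        refine Finset.sum_congr rfl fun i _ => Finset.sum_congr rfl fun j _ => ?_
        rw [Finset.mul_sum]
        exact Finset.sum_congr rfl fun ℓ _ => by ring
    _ = ∑ ℓ, ∑ j, ∑ i, c i j * B ℓ i * T ℓ j := by
        rw [Finset.sum_comm]
        rw [Finset.sum_congr rfl fun j (_ : j ∈ Finset.univ) =>
          (Finset.sum_comm : ∑ i, ∑ ℓ, c i j * B ℓ i * T ℓ j = _)]
        rw [Finset.sum_comm]
    _ = ∑ ℓ, ∑ j, (∑ i, c i j * B ℓ i) * T ℓ j := by
        refine Finset.sum_congr rfl fun ℓ _ => Finset.sum_congr rfl fun j _ => ?_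
        rw [Finset.sum_mul]

/-- Separation: `∑i∑j (∑ℓ U ℓ i * S ℓ j) * (∑k V k i * T k j)
  = ∑ℓ∑k (∑i U ℓ i * V k i) * (∑j S ℓ j * T k j)`. -/
lemma sep_piece {n N : ℕ} (U S V T : Fin N → Fin n → ℝ) :
    ∑ i, ∑ j, (∑ ℓ, U ℓ i * S ℓ j) * (∑ k, V k i * T k j)
      = ∑ ℓ, ∑ k, (∑ i, U ℓ i * V k i) * (∑ j, S ℓ j * T k j) := by
  calc ∑ i, ∑ j, (∑ ℓ, U ℓ i * S ℓ j) * (∑ k, V k i * T k j)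
      = ∑ i, ∑ j, ∑ ℓ, ∑ k, U ℓ i * V k i * (S ℓ j * T k j) := by
        refine Finset.sum_congr rfl fun i _ => Finset.sum_congr rfl fun j _ => ?_
        rw [Finset.sum_mul]
        refine Finset.sum_congr rfl fun ℓ _ => ?_
        rw [Finset.mul_sum]
        exact Finset.sum_congr rfl fun k _ => by ring
    _ = ∑ ℓ, ∑ k, ∑ i, ∑ j, U ℓ i * V k i * (S ℓ j * T k j) := by
        rw [Finset.sum_comm]
        rw [Finset.sum_congr rfl fun j (_ : j ∈ Finset.univ) =>
          (Finset.sum_comm : ∑ i, ∑ ℓ, ∑ k, U ℓ i * V k i * (S ℓ j * T k j) = _)]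
        rw [Finset.sum_congr rfl fun j _ => Finset.sum_congr rfl fun ℓ (_ : ℓ ∈ Finset.univ) =>
          (Finset.sum_comm : ∑ i, ∑ k, U ℓ i * V k i * (S ℓ j * T k j) = _)]
        rw [Finset.sum_comm]
        rw [Finset.sum_congr rfl fun ℓ (_ : ℓ ∈ Finset.univ) =>
          (Finset.sum_comm : ∑ j, ∑ k, ∑ i, U ℓ i * V k i * (S ℓ j * T k j) = _)]
        rw [Finset.sum_congr rfl fun ℓ _ => Finset.sum_congr rfl fun k (_ : k ∈ Finset.univ) =>
          (Finset.sum_comm : ∑ j, ∑ i, U ℓ i * V k i * (S ℓ j * T k j) = _)]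
    _ = ∑ ℓ, ∑ k, (∑ i, U ℓ i * V k i) * (∑ j, S ℓ j * T k j) := by
        refine Finset.sum_congr rfl fun ℓ _ => Finset.sum_congr rfl fun k _ => ?_
        rw [Finset.sum_mul]
        refine Finset.sum_congr rfl fun i _ => ?_
        rw [Finset.mul_sum]

lemma sum_algebra3 {n N : ℕ}
    (Qm : Fin n → Fin n → ℝ) (dq : Fin N → Fin n → Fin n → ℝ)
    (d2 : Fin N → Fin N → Fin n → Fin n → ℝ)
    (G HR : Fin N → Fin n → ℝ) (a : Fin N → Fin n → ℝ)
    (xv : Fin n → ℝ) (r : Fin n)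
    (V W : Fin n → Fin n → ℝ)
    (hV : ∀ i j, V i j = Qm i j + ∑ ℓ, a ℓ i * G ℓ j)
    (hW : ∀ i j, W i j = ∑ p, dq p i j * G p r
        + ∑ ℓ, ((∑ m, (∑ p, d2 ℓ p i m * G p r) * xv m + dq ℓ i r) * G ℓ j
            + a ℓ i * HR ℓ j))
    (horth : ∀ p ℓ, ∑ j, G p j * G ℓ j = if p = ℓ then 1 else 0)
    (htrace : ∀ p, ∑ i, ∑ m, Qm i m * dq p i m = 0)
    (hhess : ∀ ℓ k, ∑ j, (HR ℓ j * G k j + G ℓ j * HR k j) = 0)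
    (ha : ∀ ℓ i, a ℓ i = ∑ m, dq ℓ i m * xv m) :
    ∑ i, ∑ j, (W i j * V i j + V i j * W i j)
      = 2 * (∑ ℓ, ((∑ j, (∑ i, dq ℓ i r * Qm i j) * G ℓ j)
          + (∑ j, HR ℓ j * (∑ m, (∑ i, Qm i j * dq ℓ i m) * xv m))
          + (∑ m, (∑ i, dq ℓ i r * dq ℓ i m) * xv m)))
        + ∑ ℓ, ∑ k, (2 * ((∑ j, (∑ m, ((∑ i, dq k i j * dq ℓ i m)
              + (∑ i, Qm i j * d2 ℓ k i m)) * xv m) * G ℓ j)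
          + (∑ i, (∑ m, d2 ℓ k i m * xv m) * a ℓ i))) * G k r := by
  -- generic inner expansions
  have hAD' : ∀ (c : Fin n → ℝ) (ℓ : Fin N), ∑ i, c i * a ℓ i
      = ∑ m, (∑ i, c i * dq ℓ i m) * xv m := by
    intro c ℓ
    calc ∑ i, c i * a ℓ i = ∑ i, ∑ m, c i * dq ℓ i m * xv m := by
          refine Finset.sum_congr rfl fun i _ => ?_
          rw [ha ℓ i, Finset.mul_sum]
          exact Finset.sum_congr rfl fun m _ => by ring
      _ = ∑ m, ∑ i, c i * dq ℓ i m * xv m := Finset.sum_comm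
      _ = ∑ m, (∑ i, c i * dq ℓ i m) * xv m := by
          refine Finset.sum_congr rfl fun m _ => ?_
          rw [Finset.sum_mul]
  have hWB1 : ∀ (c : Fin n → ℝ) (ℓ : Fin N),
      ∑ i, c i * (∑ m, (∑ p, d2 ℓ p i m * G p r) * xv m)
        = ∑ p, (∑ m, (∑ i, c i * d2 ℓ p i m) * xv m) * G p r := by
    intro c ℓ
    calc ∑ i, c i * (∑ m, (∑ p, d2 ℓ p i m * G p r) * xv m)
        = ∑ i, ∑ m, ∑ p, c i * d2 ℓ p i m * xv m * G p r := by
          refine Finset.sum_congr rfl fun i _ => ?_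
          rw [Finset.mul_sum]
          refine Finset.sum_congr rfl fun m _ => ?_
          rw [Finset.sum_mul, Finset.mul_sum]
          exact Finset.sum_congr rfl fun p _ => by ring
      _ = ∑ p, ∑ m, ∑ i, c i * d2 ℓ p i m * xv m * G p r := by
          rw [Finset.sum_comm]
          rw [Finset.sum_congr rfl fun m (_ : m ∈ Finset.univ) =>
            (Finset.sum_comm : ∑ i, ∑ p, c i * d2 ℓ p i m * xv m * G p r = _)]
          rw [Finset.sum_comm]
      _ = ∑ p, (∑ m, (∑ i, c i * d2 ℓ p i m) * xv m) * G p r := by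
          refine Finset.sum_congr rfl fun p _ => ?_
          rw [Finset.sum_mul]
          refine Finset.sum_congr rfl fun m _ => ?_
          rw [Finset.sum_mul, Finset.sum_mul]
  -- the eight pieces
  have hP1 : ∑ i, ∑ j, Qm i j * (∑ p, dq p i j * G p r) = 0 := by
    calc ∑ i, ∑ j, Qm i j * (∑ p, dq p i j * G p r)
        = ∑ i, ∑ j, ∑ p, Qm i j * dq p i j * G p r := by
          refine Finset.sum_congr rfl fun i _ => Finset.sum_congr rfl fun j _ => ?_
          rw [Finset.mul_sum]
          exact Finset.sum_congr rfl fun p _ => by ring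
      _ = ∑ p, ∑ i, ∑ j, Qm i j * dq p i j * G p r := by
          rw [Finset.sum_comm]
          rw [Finset.sum_congr rfl fun j (_ : j ∈ Finset.univ) =>
            (Finset.sum_comm : ∑ i, ∑ p, Qm i j * dq p i j * G p r = _)]
          rw [Finset.sum_comm]
          rw [Finset.sum_congr rfl fun p (_ : p ∈ Finset.univ) =>
            (Finset.sum_comm : ∑ j, ∑ i, Qm i j * dq p i j * G p r = _)]
      _ = ∑ p, (∑ i, ∑ j, Qm i j * dq p i j) * G p r := by
          refine Finset.sum_congr rfl fun p _ => ?_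
          rw [Finset.sum_mul]
          refine Finset.sum_congr rfl fun i _ => ?_
          rw [Finset.sum_mul]
      _ = 0 := by
          rw [Finset.sum_congr rfl fun p (_ : p ∈ Finset.univ) =>
            (by rw [htrace p, zero_mul] : (∑ i, ∑ j, Qm i j * dq p i j) * G p r = 0)]
          simp
  have hP2 : ∑ i, ∑ j, Qm i j * (∑ ℓ, (∑ m, (∑ p, d2 ℓ p i m * G p r) * xv m) * G ℓ j)
      = ∑ ℓ, ∑ k, (∑ j, (∑ m, (∑ i, Qm i j * d2 ℓ k i m) * xv m) * G ℓ j) * G k r := by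
    rw [cD_piece]
    refine Finset.sum_congr rfl fun ℓ _ => ?_
    calc ∑ j, (∑ i, Qm i j * (∑ m, (∑ p, d2 ℓ p i m * G p r) * xv m)) * G ℓ j
        = ∑ j, (∑ p, (∑ m, (∑ i, Qm i j * d2 ℓ p i m) * xv m) * G p r) * G ℓ j := by
          refine Finset.sum_congr rfl fun j _ => ?_
          rw [hWB1 (fun i => Qm i j) ℓ]
      _ = ∑ j, ∑ p, (∑ m, (∑ i, Qm i j * d2 ℓ p i m) * xv m) * G ℓ j * G p r := by
          refine Finset.sum_congr rfl fun j _ => ?_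
          rw [Finset.sum_mul]
          exact Finset.sum_congr rfl fun p _ => by ring
      _ = ∑ p, ∑ j, (∑ m, (∑ i, Qm i j * d2 ℓ p i m) * xv m) * G ℓ j * G p r :=
          Finset.sum_comm
      _ = ∑ k, (∑ j, (∑ m, (∑ i, Qm i j * d2 ℓ k i m) * xv m) * G ℓ j) * G k r := by
          refine Finset.sum_congr rfl fun p _ => ?_
          rw [Finset.sum_mul]
  have hP3 : ∑ i, ∑ j, Qm i j * (∑ ℓ, dq ℓ i r * G ℓ j)
      = ∑ ℓ, ∑ j, (∑ i, dq ℓ i r * Qm i j) * G ℓ j := by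
    rw [cD_piece]
    refine Finset.sum_congr rfl fun ℓ _ => Finset.sum_congr rfl fun j _ => ?_
    rw [Finset.sum_congr rfl fun i (_ : i ∈ Finset.univ) =>
      (mul_comm (Qm i j) (dq ℓ i r) : Qm i j * dq ℓ i r = _)]
  have hP4 : ∑ i, ∑ j, Qm i j * (∑ ℓ, a ℓ i * HR ℓ j)
      = ∑ ℓ, ∑ j, HR ℓ j * (∑ m, (∑ i, Qm i j * dq ℓ i m) * xv m) := by
    rw [cD_piece]
    refine Finset.sum_congr rfl fun ℓ _ => Finset.sum_congr rfl fun j _ => ?_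
    rw [hAD' (fun i => Qm i j) ℓ, mul_comm]
  have hP5 : ∑ i, ∑ j, (∑ ℓ, a ℓ i * G ℓ j) * (∑ p, dq p i j * G p r)
      = ∑ ℓ, ∑ k, (∑ j, (∑ m, (∑ i, dq k i j * dq ℓ i m) * xv m) * G ℓ j) * G k r := by
    calc ∑ i, ∑ j, (∑ ℓ, a ℓ i * G ℓ j) * (∑ p, dq p i j * G p r)
        = ∑ i, ∑ j, ∑ ℓ, ∑ p, a ℓ i * dq p i j * G ℓ j * G p r := by
          refine Finset.sum_congr rfl fun i _ => Finset.sum_congr rfl fun j _ => ?_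
          rw [Finset.sum_mul]
          refine Finset.sum_congr rfl fun ℓ _ => ?_
          rw [Finset.mul_sum]
          exact Finset.sum_congr rfl fun p _ => by ring
      _ = ∑ ℓ, ∑ p, ∑ i, ∑ j, a ℓ i * dq p i j * G ℓ j * G p r := by
          rw [Finset.sum_comm]
          rw [Finset.sum_congr rfl fun j (_ : j ∈ Finset.univ) =>
            (Finset.sum_comm : ∑ i, ∑ ℓ, ∑ p, a ℓ i * dq p i j * G ℓ j * G p r = _)]
          rw [Finset.sum_congr rfl fun j _ => Finset.sum_congr rfl fun ℓ (_ : ℓ ∈ Finset.univ) =>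
            (Finset.sum_comm : ∑ i, ∑ p, a ℓ i * dq p i j * G ℓ j * G p r = _)]
          rw [Finset.sum_comm]
          rw [Finset.sum_congr rfl fun ℓ (_ : ℓ ∈ Finset.univ) =>
            (Finset.sum_comm : ∑ j, ∑ p, ∑ i, a ℓ i * dq p i j * G ℓ j * G p r = _)]
          rw [Finset.sum_congr rfl fun ℓ _ => Finset.sum_congr rfl fun p (_ : p ∈ Finset.univ) =>
            (Finset.sum_comm : ∑ j, ∑ i, a ℓ i * dq p i j * G ℓ j * G p r = _)]
      _ = ∑ ℓ, ∑ k, (∑ j, (∑ i, a ℓ i * dq k i j) * G ℓ j) * G k r := by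
          refine Finset.sum_congr rfl fun ℓ _ => Finset.sum_congr rfl fun k _ => ?_
          rw [Finset.sum_comm]
          simp only [Finset.sum_mul]
      _ = ∑ ℓ, ∑ k, (∑ j, (∑ m, (∑ i, dq k i j * dq ℓ i m) * xv m) * G ℓ j) * G k r := by
          refine Finset.sum_congr rfl fun ℓ _ => Finset.sum_congr rfl fun k _ => ?_
          have hinner : ∀ j : Fin n, (∑ i, a ℓ i * dq k i j)
              = ∑ m, (∑ i, dq k i j * dq ℓ i m) * xv m := by
            intro j
            calc ∑ i, a ℓ i * dq k i j = ∑ i, dq k i j * a ℓ i :=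
                  Finset.sum_congr rfl fun i _ => by ring
              _ = ∑ m, (∑ i, dq k i j * dq ℓ i m) * xv m := hAD' (fun i => dq k i j) ℓ
          refine congrArg (fun t => t * G k r) ?_
          exact Finset.sum_congr rfl fun j _ => by rw [hinner j]
  have hP6 : ∑ i, ∑ j, (∑ ℓ, a ℓ i * G ℓ j)
        * (∑ ℓ, (∑ m, (∑ p, d2 ℓ p i m * G p r) * xv m) * G ℓ j)
      = ∑ ℓ, ∑ k, (∑ i, (∑ m, d2 ℓ k i m * xv m) * a ℓ i) * G k r := by
    rw [sep_piece a G (fun ℓ i => ∑ m, (∑ p, d2 ℓ p i m * G p r) * xv m) G]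
    rw [collapse_delta _ _ horth]
    refine Finset.sum_congr rfl fun ℓ _ => ?_
    rw [hWB1 (fun i => a ℓ i) ℓ]
    refine Finset.sum_congr rfl fun k _ => ?_
    refine congrArg (· * G k r) ?_
    calc ∑ m, (∑ i, a ℓ i * d2 ℓ k i m) * xv m
        = ∑ m, ∑ i, a ℓ i * d2 ℓ k i m * xv m := by
          refine Finset.sum_congr rfl fun m _ => ?_
          rw [Finset.sum_mul]
      _ = ∑ i, ∑ m, a ℓ i * d2 ℓ k i m * xv m := Finset.sum_comm
      _ = ∑ i, (∑ m, d2 ℓ k i m * xv m) * a ℓ i := by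
          refine Finset.sum_congr rfl fun i _ => ?_
          rw [Finset.sum_mul]
          exact Finset.sum_congr rfl fun m _ => by ring
  have hP7 : ∑ i, ∑ j, (∑ ℓ, a ℓ i * G ℓ j) * (∑ ℓ, dq ℓ i r * G ℓ j)
      = ∑ ℓ, ∑ m, (∑ i, dq ℓ i r * dq ℓ i m) * xv m := by
    rw [sep_piece a G (fun ℓ i => dq ℓ i r) G]
    rw [collapse_delta _ _ horth]
    refine Finset.sum_congr rfl fun ℓ _ => ?_
    calc ∑ i, a ℓ i * dq ℓ i r = ∑ i, dq ℓ i r * a ℓ i :=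
          Finset.sum_congr rfl fun i _ => by ring
      _ = ∑ m, (∑ i, dq ℓ i r * dq ℓ i m) * xv m := hAD' (fun i => dq ℓ i r) ℓ
  have hP8 : ∑ i, ∑ j, (∑ ℓ, a ℓ i * G ℓ j) * (∑ ℓ, a ℓ i * HR ℓ j) = 0 := by
    rw [sep_piece a G a HR]
    refine collapse_antisym _ _ (fun ℓ k => Finset.sum_congr rfl fun i _ => by ring)
      (fun ℓ k => ?_)
    rw [← Finset.sum_add_distrib]
    rw [Finset.sum_congr rfl fun j (_ : j ∈ Finset.univ) =>
      (by ring : G ℓ j * HR k j + G k j * HR ℓ j = HR k j * G ℓ j + G k j * HR ℓ j)]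
    exact hhess k ℓ
  -- expand the left-hand side
  have hVW : ∀ i j, W i j * V i j + V i j * W i j
      = 2 * (Qm i j * (∑ p, dq p i j * G p r))
      + (2 * (Qm i j * (∑ ℓ, (∑ m, (∑ p, d2 ℓ p i m * G p r) * xv m) * G ℓ j))
      + (2 * (Qm i j * (∑ ℓ, dq ℓ i r * G ℓ j))
      + (2 * (Qm i j * (∑ ℓ, a ℓ i * HR ℓ j))
      + (2 * ((∑ ℓ, a ℓ i * G ℓ j) * (∑ p, dq p i j * G p r))
      + (2 * ((∑ ℓ, a ℓ i * G ℓ j) * (∑ ℓ, (∑ m, (∑ p, d2 ℓ p i m * G p r) * xv m) * G ℓ j))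
      + (2 * ((∑ ℓ, a ℓ i * G ℓ j) * (∑ ℓ, dq ℓ i r * G ℓ j))
      + 2 * ((∑ ℓ, a ℓ i * G ℓ j) * (∑ ℓ, a ℓ i * HR ℓ j)))))))) := by
    intro i j
    have hWsplit : W i j = (∑ p, dq p i j * G p r)
        + ((∑ ℓ, (∑ m, (∑ p, d2 ℓ p i m * G p r) * xv m) * G ℓ j)
        + ((∑ ℓ, dq ℓ i r * G ℓ j) + (∑ ℓ, a ℓ i * HR ℓ j))) := by
      rw [hW i j]
      congr 1
      rw [← Finset.sum_add_distrib, ← Finset.sum_add_distrib]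
      exact Finset.sum_congr rfl fun ℓ _ => by ring
    rw [hV i j, hWsplit]
    ring
  rw [Finset.sum_congr rfl fun i _ => Finset.sum_congr rfl fun j _ => hVW i j]
  simp only [Finset.sum_add_distrib]
  -- pull out the factors 2
  have pull2 : ∀ (f : Fin n → Fin n → ℝ), ∑ i, ∑ j, 2 * f i j = 2 * ∑ i, ∑ j, f i j := by
    intro f
    rw [Finset.mul_sum]
    refine Finset.sum_congr rfl fun i _ => ?_
    rw [Finset.mul_sum]
  rw [pull2, pull2, pull2, pull2, pull2, pull2, pull2, pull2]
  rw [hP1, hP2, hP3, hP4, hP5, hP6, hP7, hP8]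
  -- now assemble
  have hT1 : ∀ ℓ k : Fin N,
      (∑ j, (∑ m, ((∑ i, dq k i j * dq ℓ i m) + (∑ i, Qm i j * d2 ℓ k i m)) * xv m) * G ℓ j)
      = (∑ j, (∑ m, (∑ i, dq k i j * dq ℓ i m) * xv m) * G ℓ j)
        + (∑ j, (∑ m, (∑ i, Qm i j * d2 ℓ k i m) * xv m) * G ℓ j) := by
    intro ℓ k
    rw [← Finset.sum_add_distrib]
    refine Finset.sum_congr rfl fun j _ => ?_
    rw [← add_mul, ← Finset.sum_add_distrib]
    refine congrArg (· * G ℓ j) (Finset.sum_congr rfl fun m _ => ?_)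
    rw [add_mul]
  have hRHS : ∑ ℓ, ∑ k, (2 * ((∑ j, (∑ m, ((∑ i, dq k i j * dq ℓ i m)
          + (∑ i, Qm i j * d2 ℓ k i m)) * xv m) * G ℓ j)
      + (∑ i, (∑ m, d2 ℓ k i m * xv m) * a ℓ i))) * G k r
      = 2 * (∑ ℓ, ∑ k, (∑ j, (∑ m, (∑ i, dq k i j * dq ℓ i m) * xv m) * G ℓ j) * G k r)
      + (2 * (∑ ℓ, ∑ k, (∑ j, (∑ m, (∑ i, Qm i j * d2 ℓ k i m) * xv m) * G ℓ j) * G k r)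
      + 2 * (∑ ℓ, ∑ k, (∑ i, (∑ m, d2 ℓ k i m * xv m) * a ℓ i) * G k r)) := by
    rw [Finset.mul_sum, Finset.mul_sum, Finset.mul_sum]
    rw [← Finset.sum_add_distrib, ← Finset.sum_add_distrib]
    refine Finset.sum_congr rfl fun ℓ _ => ?_
    rw [Finset.mul_sum, Finset.mul_sum, Finset.mul_sum]
    rw [← Finset.sum_add_distrib, ← Finset.sum_add_distrib]
    refine Finset.sum_congr rfl fun k _ => ?_
    rw [hT1 ℓ k]
    ring
  rw [hRHS]
  have hE : ∑ ℓ, ((∑ j, (∑ i, dq ℓ i r * Qm i j) * G ℓ j)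
      + (∑ j, HR ℓ j * (∑ m, (∑ i, Qm i j * dq ℓ i m) * xv m))
      + (∑ m, (∑ i, dq ℓ i r * dq ℓ i m) * xv m))
      = (∑ ℓ, ∑ j, (∑ i, dq ℓ i r * Qm i j) * G ℓ j)
      + (∑ ℓ, ∑ j, HR ℓ j * (∑ m, (∑ i, Qm i j * dq ℓ i m) * xv m))
      + (∑ ℓ, ∑ m, (∑ i, dq ℓ i r * dq ℓ i m) * xv m) := by
    rw [Finset.sum_add_distrib, Finset.sum_add_distrib]
  clear hE
  ring

end Stmt5Aux
/-- Lemma 3.8: second-order identities for a map `u(x) = Q(y(x)) x`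
with `Q` an `SO(n)`-valued `C²` matrix field of the 2-plane radial variables. -/
theorem stmt5 (n : ℕ) (hn : 2 ≤ n)
    (Q : (Fin ((n+1)/2) → ℝ) → Matrix (Fin n) (Fin n) ℝ)
    (hQreg : ∀ i j, ContDiff ℝ 2 fun y => Q y i j)
    (hQSO : ∀ y, (Q y)ᵀ * Q y = 1 ∧ (Q y).det = 1)
    (u : (Fin n → ℝ) → Fin n → ℝ)
    (hu : ∀ z, u z = Q (yv z) *ᵥ z)
    (x : Fin n → ℝ)
    (hx : ∀ ℓ : Fin ((n+1)/2), 2*(ℓ:ℕ)+1 < n → 0 < yvar x ℓ) :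
    let y0 := yv x
    let gy : Fin ((n+1)/2) → Fin n → ℝ := fun ℓ => gradx (fun z => yvar z ℓ) x
    let ly : Fin ((n+1)/2) → ℝ := fun ℓ => lapx (fun z => yvar z ℓ) x
    -- (i)
    (lapv u x = ∑ ℓ, (pdM2 Q y0 ℓ ℓ *ᵥ x + ly ℓ • (pdM Q y0 ℓ *ᵥ x)
        + (2:ℝ) • (pdM Q y0 ℓ *ᵥ gy ℓ))) ∧
    -- (ii)
    ((gradm u x)ᵀ *ᵥ lapv u x
      = (∑ ℓ, (((Q y0)ᵀ * pdM2 Q y0 ℓ ℓ) *ᵥ x + ly ℓ • (((Q y0)ᵀ * pdM Q y0 ℓ) *ᵥ x)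
            + (2:ℝ) • (((Q y0)ᵀ * pdM Q y0 ℓ) *ᵥ gy ℓ)))
        + ∑ ℓ, ∑ k, (((pdM Q y0 ℓ *ᵥ x) ⬝ᵥ (pdM2 Q y0 k k *ᵥ x))
            + ly k * ((pdM Q y0 ℓ *ᵥ x) ⬝ᵥ (pdM Q y0 k *ᵥ x))
            + 2 * ((pdM Q y0 ℓ *ᵥ x) ⬝ᵥ (pdM Q y0 k *ᵥ gy k))) • gy ℓ) ∧
    -- (iii)
    (gradx (fun z => frob2 (gradm u z)) x
      = (2:ℝ) • (∑ ℓ, (((pdM Q y0 ℓ)ᵀ * Q y0) *ᵥ gy ℓ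
            + hessx (fun z => yvar z ℓ) x *ᵥ (((Q y0)ᵀ * pdM Q y0 ℓ) *ᵥ x)
            + ((pdM Q y0 ℓ)ᵀ * pdM Q y0 ℓ) *ᵥ x))
        + ∑ ℓ, ∑ k, (2 * (((((pdM Q y0 k)ᵀ * pdM Q y0 ℓ + (Q y0)ᵀ * pdM2 Q y0 ℓ k) *ᵥ x) ⬝ᵥ gy ℓ)
            + ((pdM2 Q y0 ℓ k *ᵥ x) ⬝ᵥ (pdM Q y0 ℓ *ᵥ x)))) • gy k) := by
  intro y0 gy ly
  have hx' : Stmt5Aux.Pos n x := hx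
  -- part (i)
  have hi : lapv u x = ∑ ℓ, (pdM2 Q y0 ℓ ℓ *ᵥ x + ly ℓ • (pdM Q y0 ℓ *ᵥ x)
      + (2:ℝ) • (pdM Q y0 ℓ *ᵥ gy ℓ)) := by
    funext i
    have hstep : ∀ j : Fin n, pdx (fun z => pdx (fun w => u w i) z j) x j
        = pdx (Stmt5Aux.vf Q i j) x j :=
      fun j => Stmt5Aux.pdx_congr
        ((Stmt5Aux.eventually_pos hx').mono fun z hz =>
          Stmt5Aux.v_eq Q hQreg u hu hz i j) j
    show ∑ j, pdx (fun z => pdx (fun w => u w i) z j) x j = _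
    rw [Finset.sum_congr rfl fun j _ => hstep j,
      Finset.sum_congr rfl fun j _ => Stmt5Aux.pdx_vf Q hQreg hx' i j j]
    rw [Stmt5Aux.sum_algebra1 (fun p j => Stmt5Aux.Gf n p j x)
      (fun ℓ j => hessx (fun w => yvar w ℓ) x j j)
      (fun p j => pdM Q (yv x) p i j)
      (fun ℓ p m => pdM2 Q (yv x) ℓ p i m)
      (fun ℓ => Stmt5Aux.Af Q ℓ i x) x
      (Stmt5Aux.gram_x hx') (fun ℓ => rfl)]
    rw [Finset.sum_apply]
    refine Finset.sum_congr rfl fun ℓ _ => ?_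
    rw [Pi.add_apply, Pi.add_apply, Pi.smul_apply, Pi.smul_apply, smul_eq_mul, smul_eq_mul]
    rfl
  refine ⟨hi, ?_, ?_⟩
  -- part (ii)
  · have hgrad := Stmt5Aux.gradm_eq Q hQreg u hu hx'
    rw [hi, hgrad]
    rw [Matrix.transpose_add, Matrix.transpose_sum, Matrix.add_mulVec,
      Stmt5Aux.sum_mulVec]
    rw [Finset.sum_congr rfl fun ℓ _ =>
      Stmt5Aux.vecMulVec_transpose_mulVec (pdM Q (yv x) ℓ *ᵥ x)
        (fun j => Stmt5Aux.Gf n ℓ j x) _]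
    rw [Stmt5Aux.mulVec_sumVec]
    simp only [Stmt5Aux.dotProduct_sumVec, Matrix.mulVec_add, Matrix.mulVec_smul,
      Matrix.mulVec_mulVec, dotProduct_add, dotProduct_smul,
      smul_eq_mul, Finset.sum_smul]
    rfl
  -- part (iii)
  · funext r
    show pdx (fun z => frob2 (gradm u z)) x r = _
    have hev : ∀ᶠ z in nhds x, frob2 (gradm u z)
        = ∑ i, ∑ j, Stmt5Aux.vf Q i j z * Stmt5Aux.vf Q i j z :=
      (Stmt5Aux.eventually_pos hx').mono fun z hz => by
        refine Finset.sum_congr rfl fun i _ => Finset.sum_congr rfl fun j _ => ?_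
        rw [show gradm u z i j = pdx (fun w => u w i) z j from rfl,
          Stmt5Aux.v_eq Q hQreg u hu hz i j, pow_two]
    rw [Stmt5Aux.pdx_congr hev r]
    have hd : ∀ (i j : Fin n),
        DifferentiableAt ℝ (fun z => Stmt5Aux.vf Q i j z * Stmt5Aux.vf Q i j z) x :=
      fun i j => (Stmt5Aux.vf_diff Q hQreg hx' i j).mul (Stmt5Aux.vf_diff Q hQreg hx' i j)
    rw [Stmt5Aux.pdx_sum Finset.univ
      (fun i _ => DifferentiableAt.fun_sum fun j _ => hd i j) r]
    rw [Finset.sum_congr rfl fun i _ => Stmt5Aux.pdx_sum Finset.univ (fun j _ => hd i j) r]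
    rw [Finset.sum_congr rfl fun i _ => Finset.sum_congr rfl fun j _ =>
      Stmt5Aux.pdx_mul (Stmt5Aux.vf_diff Q hQreg hx' i j) (Stmt5Aux.vf_diff Q hQreg hx' i j) r]
    have halg := Stmt5Aux.sum_algebra3 (fun i j => Q (yv x) i j)
      (fun p i j => pdM Q (yv x) p i j)
      (fun ℓ p i m => pdM2 Q (yv x) ℓ p i m)
      (fun ℓ j => Stmt5Aux.Gf n ℓ j x)
      (fun ℓ j => hessx (fun w => yvar w ℓ) x r j)
      (fun ℓ i => Stmt5Aux.Af Q ℓ i x) x r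
      (fun i j => Stmt5Aux.vf Q i j x)
      (fun i j => pdx (Stmt5Aux.vf Q i j) x r)
      (fun i j => rfl)
      (fun i j => Stmt5Aux.pdx_vf Q hQreg hx' i j r)
      (Stmt5Aux.gram_x hx')
      (Stmt5Aux.Qtrace Q hQreg hQSO (yv x))
      (fun ℓ k => Stmt5Aux.hess_gram hx' ℓ k r)
      (fun ℓ i => rfl)
    rw [halg]
    simp only [Pi.add_apply, Pi.smul_apply, Finset.sum_apply, smul_eq_mul]
    rfl
end
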